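/- arXiv:1711.01873 — 6 statements merged into one kernel-verified Lean document; each statement's English description precedes it below -/
import Mathlib

section
/- Fix n ≥ 1, m ≥ 2, integers ν_1,…,ν_{m−1} ≥ 0 with the convention ν_m = 0, and continuous functions V_1,…,V_{m−1} : [0,∞) → [0,∞) such that all integrals below converge absolutely. For k ∈ {1,…,n} and y > 0 define ψ_k(y) = ∫_{(0,∞)^{m−1}} t_1^{ν_1+k−1} ∏_{l=2}^{m−1}(t_l/t_{l−1})^{ν_l} exp(−t_1 − ∑_{l=2}^{m−1} t_l/t_{l−1} − y/t_{m−1} − ∑_{l=1}^{m−1} V_l(t_l)) (dt_1/t_1)⋯(dt_{m−1}/t_{m−1}). Then for every fixed y^m ∈ (0,∞)^n one has ∫_{((0,∞)^n)^{m−1}} ∏_{l=1}^{m−1} det[(y_j^{l+1})^{ν_{l+1}} (y_k^l)^{−ν_{l+1}−1} exp(−y_j^{l+1}/y_k^l − V_l(y_k^l))]_{j,k=1}^n · det[(y_j^1)^{ν_1+k−1} e^{−y_j^1}]_{j,k=1}^n dy^1⋯dy^{m−1} = (n!)^{m−1} det[ψ_k(y_j^m)]_{j,k=1}^n. -/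
open MeasureTheory Real Set Finset

/-- First index of `Fin (m-1)` (corresponding to `t_1`). -/
def idx0 (m : ℕ) (hm : 2 ≤ m) : Fin (m - 1) := ⟨0, by omega⟩

/-- Last index of `Fin (m-1)` (corresponding to `t_{m-1}`). -/
def idxLast (m : ℕ) (hm : 2 ≤ m) : Fin (m - 1) := ⟨m - 2, by omega⟩

/-- For `l : Fin (m-2)`, the index of `t_{l+1}` (lower index of the ratio `t_{l+2}/t_{l+1}`). -/
def idxLo {m : ℕ} (l : Fin (m - 2)) : Fin (m - 1) := ⟨(l : ℕ), by have := l.isLt; omega⟩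

/-- For `l : Fin (m-2)`, the index of `t_{l+2}` (upper index of the ratio). -/
def idxHi {m : ℕ} (l : Fin (m - 2)) : Fin (m - 1) := ⟨(l : ℕ) + 1, by have := l.isLt; omega⟩

/-- The function `ψ_k(y)` (for the 0-based index `k : Fin n`, corresponding to the 1-based
index `k+1`):
`ψ_k(y) = ∫_{(0,∞)^{m−1}} t_1^{ν_1+k−1} ∏_{l=2}^{m−1}(t_l/t_{l−1})^{ν_l}
  exp(−t_1 − ∑_{l=2}^{m−1} t_l/t_{l−1} − y/t_{m−1} − ∑_{l=1}^{m−1} V_l(t_l))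
  (dt_1/t_1)⋯(dt_{m−1}/t_{m−1})`. -/
noncomputable def psiFun (n m : ℕ) (hm : 2 ≤ m) (ν : ℕ → ℕ) (V : Fin (m - 1) → ℝ → ℝ)
    (k : Fin n) (y : ℝ) : ℝ :=
  ∫ t in {t : Fin (m - 1) → ℝ | ∀ l, 0 < t l},
    (t (idx0 m hm)) ^ (ν 1 + (k : ℕ)) *
      (∏ l : Fin (m - 2), (t (idxHi l) / t (idxLo l)) ^ (ν ((l : ℕ) + 2))) *
      Real.exp (-(t (idx0 m hm)) - (∑ l : Fin (m - 2), t (idxHi l) / t (idxLo l))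
        - y / t (idxLast m hm) - ∑ l : Fin (m - 1), V l (t l)) *
      ∏ l : Fin (m - 1), (t l)⁻¹

/-! ### Auxiliary material -/

lemma det_eq_sum_perm {n : ℕ} (M : Matrix (Fin n) (Fin n) ℝ) :
    M.det = ∑ σ : Equiv.Perm (Fin n), ((Equiv.Perm.sign σ : ℤ) : ℝ) * ∏ i, M (σ i) i := by
  simp [Matrix.det_apply, Units.smul_def, zsmul_eq_mul]

lemma measurable_transpose {ι κ : Type*} [Fintype ι] [Fintype κ] :
    Measurable (fun (y : ι → κ → ℝ) (k : κ) (l : ι) => y l k) := by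
  refine measurable_pi_lambda _ fun k => measurable_pi_lambda _ fun l => ?_
  exact (measurable_pi_apply k).comp (measurable_pi_apply l)

/-- Transpose as a measurable equivalence. -/
def transposeEquiv (ι κ : Type*) [Fintype ι] [Fintype κ] :
    (ι → κ → ℝ) ≃ᵐ (κ → ι → ℝ) where
  toFun y k l := y l k
  invFun z l k := z k l
  left_inv _ := rfl
  right_inv _ := rfl
  measurable_toFun := measurable_transpose
  measurable_invFun := measurable_transpose

lemma measurePreserving_transpose (ι κ : Type*) [Fintype ι] [Fintype κ] :
    MeasurePreserving (transposeEquiv ι κ) volume volume := by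
  constructor
  · exact measurable_transpose
  · have := Measure.pi_eq_generateFrom
      (μ := fun _ : κ => (volume : Measure (ι → ℝ)))
      (C := fun _ : κ => Set.pi univ '' Set.pi univ fun _ : ι => { s : Set ℝ | MeasurableSet s })
      (fun _ => generateFrom_pi) (fun _ => isPiSystem_pi)
      (fun _ => by
        rw [volume_pi]
        exact MeasureTheory.Measure.FiniteSpanningSetsIn.pi
          (fun _ => (volume : Measure ℝ).toFiniteSpanningSetsIn))
      (μν := Measure.map (transposeEquiv ι κ) volume) ?_
    · rw [show (volume : Measure (κ → ι → ℝ)) = Measure.pi fun _ => volume from volume_pi]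
      exact this.symm
    · intro s hs
      choose t ht hts using hs
      have htm : ∀ k l, MeasurableSet (t k l) := fun k l => ht k l (Set.mem_univ l)
      have hsm : ∀ k, MeasurableSet (s k) := by
        intro k; rw [← hts k]; exact MeasurableSet.univ_pi (htm k)
      have hTcoe : ⇑(transposeEquiv ι κ) = fun (y : ι → κ → ℝ) (k : κ) (l : ι) => y l k := rfl
      rw [hTcoe, Measure.map_apply measurable_transpose (MeasurableSet.univ_pi hsm)]
      have hpre : (fun (y : ι → κ → ℝ) (k : κ) (l : ι) => y l k) ⁻¹' (Set.pi univ s) =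
          Set.pi univ fun l : ι => Set.pi univ fun k : κ => t k l := by
        ext y
        simp only [Set.mem_preimage, Set.mem_pi, Set.mem_univ, forall_true_left]
        constructor
        · intro h l k
          have := h k
          rw [← hts k] at this
          exact this l (Set.mem_univ l)
        · intro h k
          rw [← hts k]
          intro l _
          exact h l k
      rw [hpre, volume_pi_pi]
      have : ∀ k, (volume : Measure (ι → ℝ)) (s k) = ∏ l : ι, volume (t k l) := by
        intro k; rw [← hts k, volume_pi_pi]
      simp_rw [this, volume_pi_pi]
      exact Finset.prod_comm

lemma piCongrLeft_const_apply {κ : Type*} (e : κ ≃ κ) (v : κ → ℝ) (k : κ) :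
    Equiv.piCongrLeft (fun _ : κ => ℝ) e v k = v (e.symm k) := by
  conv_lhs => rw [show k = e (e.symm k) by simp]
  rw [Equiv.piCongrLeft_apply_apply]

/-- Level-wise permutation of coordinates as a measurable equivalence. -/
def levelPermEquiv {ι κ : Type*} (pe : ι → Equiv.Perm κ) : (ι → κ → ℝ) ≃ᵐ (ι → κ → ℝ) :=
  MeasurableEquiv.piCongrRight fun l =>
    MeasurableEquiv.piCongrLeft (fun _ : κ => ℝ) ((pe l).symm)

lemma levelPermEquiv_coe {ι κ : Type*} (pe : ι → Equiv.Perm κ) :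
    ⇑(levelPermEquiv pe) = fun (y : ι → κ → ℝ) (l : ι) (k : κ) => y l (pe l k) := by
  funext y l k
  show (Equiv.piCongrLeft (fun _ : κ => ℝ) ((pe l).symm)) (y l) k = y l (pe l k)
  rw [piCongrLeft_const_apply]
  simp

lemma measurePreserving_levelPermEquiv {ι κ : Type*} [Fintype ι] [Fintype κ]
    (pe : ι → Equiv.Perm κ) :
    MeasurePreserving (levelPermEquiv pe) volume volume := by
  have h1 : ∀ l : ι, MeasurePreserving
      (⇑(MeasurableEquiv.piCongrLeft (fun _ : κ => ℝ) ((pe l).symm)))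
      (volume : Measure (κ → ℝ)) volume := fun l =>
    volume_measurePreserving_piCongrLeft (fun _ => ℝ) _
  have h2 := volume_preserving_pi h1
  have : ⇑(levelPermEquiv pe) = fun (a : ι → κ → ℝ) (l : ι) =>
      (MeasurableEquiv.piCongrLeft (fun _ : κ => ℝ) ((pe l).symm)) (a l) := rfl
  rw [this]
  exact h2

/-- Integral of a product of chain functions along permuted coordinates. -/
lemma chain_product_integral {ι κ : Type*} [Fintype ι] [Fintype κ]
    (pe : ι → Equiv.Perm κ) {h : κ → (ι → ℝ) → ℝ}
    (hint : ∀ k, Integrable (h k)) :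
    Integrable (fun y : ι → κ → ℝ => ∏ k, h k (fun l => y l (pe l k))) ∧
    ∫ y : ι → κ → ℝ, ∏ k, h k (fun l => y l (pe l k)) = ∏ k, ∫ t : ι → ℝ, h k t := by
  have hG : Integrable (fun z : κ → ι → ℝ => ∏ k, h k (z k)) := Integrable.fintype_prod hint
  have hGi := integral_fintype_prod_eq_prod (𝕜 := ℝ) (ι := κ) (fun k => h k) (μ := fun _ => volume)
  have hcomp : (fun y : ι → κ → ℝ => ∏ k, h k (fun l => y l (pe l k))) =
      (fun z : κ → ι → ℝ => ∏ k, h k (z k)) ∘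
        (⇑(transposeEquiv ι κ) ∘ ⇑(levelPermEquiv pe)) := by
    funext y
    simp only [Function.comp_apply, levelPermEquiv_coe]
    rfl
  have hmp : MeasurePreserving (⇑(transposeEquiv ι κ) ∘ ⇑(levelPermEquiv pe))
      (volume : Measure (ι → κ → ℝ)) volume :=
    (measurePreserving_transpose ι κ).comp (measurePreserving_levelPermEquiv pe)
  have hemb : MeasurableEmbedding (⇑(transposeEquiv ι κ) ∘ ⇑(levelPermEquiv pe)) :=
    (transposeEquiv ι κ).measurableEmbedding.comp (levelPermEquiv pe).measurableEmbedding
  constructor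
  · rw [hcomp]
    exact (hmp.integrable_comp_emb hemb).2 hG
  · rw [hcomp]
    have hmp' : MeasurePreserving ((levelPermEquiv pe).trans (transposeEquiv ι κ))
        (volume : Measure (ι → κ → ℝ)) volume :=
      (measurePreserving_transpose ι κ).comp (measurePreserving_levelPermEquiv pe)
    have hInt := hmp'.integral_comp' (f := (levelPermEquiv pe).trans (transposeEquiv ι κ))
      (fun z : κ → ι → ℝ => ∏ k, h k (z k))
    rw [show (⇑(transposeEquiv ι κ) ∘ ⇑(levelPermEquiv pe)) =
      ⇑((levelPermEquiv pe).trans (transposeEquiv ι κ)) from rfl]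
    rw [← hGi]
    exact hInt

noncomputable def epsR {n : ℕ} (τ : Equiv.Perm (Fin n)) : ℝ := ((Equiv.Perm.sign τ : ℤ) : ℝ)

lemma epsR_mul {n : ℕ} (a b : Equiv.Perm (Fin n)) : epsR (a * b) = epsR a * epsR b := by
  simp [epsR]

lemma epsR_sq {n : ℕ} (a : Equiv.Perm (Fin n)) : epsR a * epsR a = 1 := by
  rcases Int.units_eq_one_or (Equiv.Perm.sign a) with h | h <;> simp [epsR, h]

lemma det_eq_sum_perm' {n : ℕ} (M : Matrix (Fin n) (Fin n) ℝ) :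
    M.det = ∑ σ : Equiv.Perm (Fin n), epsR σ * ∏ i, M (σ i) i :=
  det_eq_sum_perm M

/-- Partial composition `σ_{N-1} * ⋯ * σ_0`. -/
def Pn {G : Type*} [Group G] {M : ℕ} (σ : Fin M → G) : ℕ → G
  | 0 => 1
  | (N + 1) => (if h : N < M then σ ⟨N, h⟩ else 1) * Pn σ N

lemma Pn_congr {G : Type*} [Group G] {M : ℕ} (σ σ' : Fin M → G) (N : ℕ)
    (h : ∀ l : Fin M, (l : ℕ) < N → σ l = σ' l) : Pn σ N = Pn σ' N := by
  induction N with
  | zero => rfl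
  | succ N ih =>
    show (if hh : N < M then σ ⟨N, hh⟩ else 1) * Pn σ N
        = (if hh : N < M then σ' ⟨N, hh⟩ else 1) * Pn σ' N
    rw [ih (fun l hl => h l (by omega))]
    congr 1
    split_ifs with hN
    · exact h ⟨N, hN⟩ (by simp)
    · rfl

lemma Pn_succ_eq {G : Type*} [Group G] {M : ℕ} (σ : Fin M → G) (l : Fin M) :
    Pn σ ((l : ℕ) + 1) = σ l * Pn σ (l : ℕ) := by
  show (if hh : (l : ℕ) < M then σ ⟨(l : ℕ), hh⟩ else 1) * Pn σ (l : ℕ) = _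
  rw [dif_pos l.isLt, Fin.eta]

lemma epsR_Pn {n M : ℕ} (σ : Fin M → Equiv.Perm (Fin n)) :
    ∏ l : Fin M, epsR (σ l) = epsR (Pn σ M) := by
  have key : ∀ N : ℕ, epsR (Pn σ N)
      = ∏ i ∈ Finset.range N, epsR (if h : i < M then σ ⟨i, h⟩ else 1) := by
    intro N
    induction N with
    | zero => simp [Pn, epsR]
    | succ N ih =>
      show epsR ((if h : N < M then σ ⟨N, h⟩ else 1) * Pn σ N) = _
      rw [epsR_mul, ih, Finset.prod_range_succ, mul_comm]
  rw [key M, ← Fin.prod_univ_eq_prod_range (fun i => epsR (if h : i < M then σ ⟨i, h⟩ else 1)) M]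
  apply Finset.prod_congr rfl
  intro l _
  rw [dif_pos l.isLt, Fin.eta]

/-- Counting: summing a function of the total composition over all tuples. -/
lemma sum_Pn_eq {G : Type*} [Group G] [Fintype G] [DecidableEq G] {M : ℕ} (hM : 1 ≤ M)
    (g : G → ℝ) :
    ∑ σ : Fin M → G, g (Pn σ M) = (Fintype.card G : ℝ) ^ (M - 1) * ∑ p : G, g p := by
  classical
  set last : Fin M := ⟨M - 1, by omega⟩ with hlast
  have hPsplit : ∀ σ : Fin M → G, Pn σ M = σ last * Pn σ (M - 1) := by
    intro σ
    have h1 : M = (M - 1) + 1 := by omega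
    calc Pn σ M = Pn σ ((M - 1) + 1) := congrArg (Pn σ) h1
    _ = σ last * Pn σ ((last : ℕ)) := Pn_succ_eq σ last
  have hindep : ∀ (σ : Fin M → G) (x : G),
      Pn (Function.update σ last x) (M - 1) = Pn σ (M - 1) := by
    intro σ x
    apply Pn_congr
    intro l hl
    apply Function.update_of_ne
    intro hcon
    rw [hcon] at hl
    simp [hlast] at hl
  set E : (Fin M → G) → (Fin M → G) :=
    fun σ => Function.update σ last (σ last * (Pn σ (M - 1))⁻¹) with hE
  set E' : (Fin M → G) → (Fin M → G) :=
    fun σ => Function.update σ last (σ last * Pn σ (M - 1)) with hE'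
  have hEE' : ∀ σ, E' (E σ) = σ := by
    intro σ
    simp only [hE, hE']
    rw [hindep]
    rw [Function.update_idem, Function.update_self]
    rw [inv_mul_cancel_right, Function.update_eq_self]
  have hE'E : ∀ σ, E (E' σ) = σ := by
    intro σ
    simp only [hE, hE']
    rw [hindep]
    rw [Function.update_idem, Function.update_self]
    rw [mul_inv_cancel_right, Function.update_eq_self]
  have hbij : Function.Bijective E :=
    Function.bijective_iff_has_inverse.2 ⟨E', hEE', hE'E⟩
  have step1 : ∑ σ : Fin M → G, g (Pn σ M) = ∑ σ : Fin M → G, g (σ last) := by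
    rw [← Function.Bijective.sum_comp hbij (fun σ => g (Pn σ M))]
    apply Finset.sum_congr rfl
    intro σ _
    rw [hPsplit (E σ)]
    simp only [hE]
    rw [hindep, Function.update_self, inv_mul_cancel_right]
  rw [step1]
  set e : (Fin M → G) ≃ G × ({a : Fin M // a ≠ last} → G) :=
    Equiv.piSplitAt last (fun _ : Fin M => G) with he
  rw [← Equiv.sum_comp e.symm (fun σ : Fin M → G => g (σ last))]
  have heval : ∀ p : G × ({a : Fin M // a ≠ last} → G), (e.symm p) last = p.1 := by
    intro p
    simp [he, Equiv.piSplitAt_symm_apply]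
  simp only [heval]
  rw [Fintype.sum_prod_type]
  simp only [Finset.sum_const, Finset.card_univ, nsmul_eq_mul]
  rw [← Finset.mul_sum]
  have hcard : Fintype.card ({a : Fin M // a ≠ last} → G)
      = Fintype.card G ^ (M - 1) := by
    rw [Fintype.card_fun]
    congr 1
    rw [Fintype.card_subtype_compl]
    simp
  rw [hcard]
  push_cast
  ring

/-- Pairing identity. -/
lemma pairing_sum {n : ℕ} (Ψ : Fin n → Fin n → ℝ) :
    ∑ τ : Equiv.Perm (Fin n), ∑ p : Equiv.Perm (Fin n),
        epsR τ * epsR p * ∏ k, Ψ (τ k) (p k)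
      = (n.factorial : ℝ) * ∑ ρ : Equiv.Perm (Fin n), epsR ρ * ∏ c, Ψ c (ρ c) := by
  have inner : ∀ τ : Equiv.Perm (Fin n),
      ∑ p : Equiv.Perm (Fin n), epsR τ * epsR p * ∏ k, Ψ (τ k) (p k)
        = ∑ ρ : Equiv.Perm (Fin n), epsR ρ * ∏ c, Ψ c (ρ c) := by
    intro τ
    rw [← Equiv.sum_comp (Equiv.mulRight τ)
      (fun p : Equiv.Perm (Fin n) => epsR τ * epsR p * ∏ k, Ψ (τ k) (p k))]
    apply Finset.sum_congr rfl
    intro ρ _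
    have h1 : (Equiv.mulRight τ) ρ = ρ * τ := rfl
    rw [h1, epsR_mul]
    have h2 : ∀ k, (ρ * τ) k = ρ (τ k) := fun k => rfl
    have h3 : ∏ k, Ψ (τ k) ((ρ * τ) k) = ∏ c, Ψ c (ρ c) := by
      simp only [h2]
      exact Equiv.prod_comp τ (fun c => Ψ c (ρ c))
    rw [h3]
    have key : epsR τ * (epsR ρ * epsR τ) = epsR ρ := by
      rw [show epsR τ * (epsR ρ * epsR τ) = epsR ρ * (epsR τ * epsR τ) from by ring,
        epsR_sq, mul_one]
    rw [key]
  simp only [inner]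
  rw [Finset.sum_const, Finset.card_univ, Fintype.card_perm, nsmul_eq_mul]
  simp

lemma prod_split_m {m : ℕ} (hm : 2 ≤ m) (f : Fin (m - 1) → ℝ) :
    ∏ l, f l = (∏ l' : Fin (m - 2), f (idxLo l')) * f (idxLast m hm) := by
  obtain ⟨K, rfl⟩ : ∃ K, m = K + 2 := ⟨m - 2, by omega⟩
  show (∏ l : Fin (K + 1), f l) = (∏ l' : Fin K, f (idxLo l')) * f (idxLast (K + 2) hm)
  rw [Fin.prod_univ_castSucc (f := f)]
  exact congrArg₂ (· * ·) (Finset.prod_congr rfl fun l' _ => congrArg f (Fin.ext rfl))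
    (congrArg f (Fin.ext rfl))

lemma chain_eq (m : ℕ) (hm : 2 ≤ m) (ν : ℕ → ℕ) (hνm : ν m = 0)
    (V : Fin (m - 1) → ℝ → ℝ) (c : ℕ) (yj : ℝ) (t : Fin (m - 1) → ℝ) :
    (t (idx0 m hm)) ^ (ν 1 + c) * Real.exp (-(t (idx0 m hm))) *
      ∏ l : Fin (m - 1),
        ((if hl : (l : ℕ) + 1 < m - 1 then t ⟨(l : ℕ) + 1, hl⟩ else yj) ^ (ν ((l : ℕ) + 2)) *
          ((t l) ^ (ν ((l : ℕ) + 2) + 1))⁻¹ *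
          Real.exp (-((if hl : (l : ℕ) + 1 < m - 1 then t ⟨(l : ℕ) + 1, hl⟩ else yj) / t l)
            - V l (t l)))
    = (t (idx0 m hm)) ^ (ν 1 + c) *
        (∏ l : Fin (m - 2), (t (idxHi l) / t (idxLo l)) ^ (ν ((l : ℕ) + 2))) *
        Real.exp (-(t (idx0 m hm)) - (∑ l : Fin (m - 2), t (idxHi l) / t (idxLo l))
          - yj / t (idxLast m hm) - ∑ l : Fin (m - 1), V l (t l)) *
        ∏ l : Fin (m - 1), (t l)⁻¹ := by
  have e1 : ∀ (a b vv : ℝ) (q : ℕ),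
      a ^ q * (b ^ (q + 1))⁻¹ * Real.exp (-(a / b) - vv)
        = a ^ q * ((b ^ q)⁻¹ * (b⁻¹ * (Real.exp (-(a / b)) * Real.exp (-vv)))) := by
    intro a b vv q
    rw [pow_succ, mul_inv, sub_eq_add_neg, Real.exp_add]
    ring
  simp only [e1, Finset.prod_mul_distrib]
  have hlast_not : ¬ ((m - 2 : ℕ) + 1 < m - 1) := by omega
  have hν_last : ν (((idxLast m hm : Fin (m - 1)) : ℕ) + 2) = 0 := by
    show ν ((m - 2 : ℕ) + 2) = 0
    rw [show m - 2 + 2 = m by omega, hνm]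
  have hdite_last : (if hl : ((idxLast m hm : Fin (m - 1)) : ℕ) + 1 < m - 1
      then t ⟨((idxLast m hm : Fin (m - 1)) : ℕ) + 1, hl⟩ else yj) = yj := dif_neg hlast_not
  have hdite_lo : ∀ l' : Fin (m - 2),
      (if hl : ((idxLo l' : Fin (m - 1)) : ℕ) + 1 < m - 1
        then t ⟨((idxLo l' : Fin (m - 1)) : ℕ) + 1, hl⟩ else yj) = t (idxHi l') := by
    intro l'
    have hpos : ((idxLo l' : Fin (m - 1)) : ℕ) + 1 < m - 1 := by
      have := l'.isLt; show (l' : ℕ) + 1 < m - 1; omega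
    rw [dif_pos hpos]
    exact congrArg t (Fin.ext rfl)
  have h2a : (∏ l : Fin (m - 1),
        (if hl : (l : ℕ) + 1 < m - 1 then t ⟨(l : ℕ) + 1, hl⟩ else yj) ^ (ν ((l : ℕ) + 2)))
      = ∏ l' : Fin (m - 2), (t (idxHi l')) ^ (ν ((l' : ℕ) + 2)) := by
    rw [prod_split_m hm (f := fun l : Fin (m - 1) =>
      (if hl : (l : ℕ) + 1 < m - 1 then t ⟨(l : ℕ) + 1, hl⟩ else yj) ^ (ν ((l : ℕ) + 2)))]
    rw [hdite_last, hν_last, pow_zero, mul_one]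
    exact Finset.prod_congr rfl fun l' _ => by rw [hdite_lo l']; rfl
  have h2b : (∏ l : Fin (m - 1), ((t l) ^ (ν ((l : ℕ) + 2)))⁻¹)
      = ∏ l' : Fin (m - 2), ((t (idxLo l')) ^ (ν ((l' : ℕ) + 2)))⁻¹ := by
    rw [prod_split_m hm (f := fun l : Fin (m - 1) => ((t l) ^ (ν ((l : ℕ) + 2)))⁻¹)]
    rw [hν_last, pow_zero, inv_one, mul_one]
    rfl
  have h3 : (∏ l : Fin (m - 1),
        Real.exp (-((if hl : (l : ℕ) + 1 < m - 1 then t ⟨(l : ℕ) + 1, hl⟩ else yj) / t l)))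
      = (∏ l' : Fin (m - 2), Real.exp (-(t (idxHi l') / t (idxLo l')))) *
          Real.exp (-(yj / t (idxLast m hm))) := by
    rw [prod_split_m hm (f := fun l : Fin (m - 1) =>
      Real.exp (-((if hl : (l : ℕ) + 1 < m - 1 then t ⟨(l : ℕ) + 1, hl⟩ else yj) / t l)))]
    rw [hdite_last]
    exact congrArg₂ _ (Finset.prod_congr rfl fun l' _ => by rw [hdite_lo l']) rfl
  have h4 : Real.exp (-(t (idx0 m hm)) - (∑ l : Fin (m - 2), t (idxHi l) / t (idxLo l))
        - yj / t (idxLast m hm) - ∑ l : Fin (m - 1), V l (t l))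
      = Real.exp (-(t (idx0 m hm))) *
          ((∏ l' : Fin (m - 2), Real.exp (-(t (idxHi l') / t (idxLo l')))) *
          (Real.exp (-(yj / t (idxLast m hm))) *
          (∏ l : Fin (m - 1), Real.exp (-V l (t l))))) := by
    rw [show (-(t (idx0 m hm)) - (∑ l : Fin (m - 2), t (idxHi l) / t (idxLo l))
        - yj / t (idxLast m hm) - ∑ l : Fin (m - 1), V l (t l))
      = (-(t (idx0 m hm))) + ((∑ l : Fin (m - 2), -(t (idxHi l) / t (idxLo l)))
        + ((-(yj / t (idxLast m hm))) + (∑ l : Fin (m - 1), -(V l (t l))))) from by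
        rw [Finset.sum_neg_distrib, Finset.sum_neg_distrib]; ring]
    rw [Real.exp_add, Real.exp_add, Real.exp_add, Real.exp_sum, Real.exp_sum]
  have h2c : (∏ l' : Fin (m - 2), (t (idxHi l') / t (idxLo l')) ^ (ν ((l' : ℕ) + 2)))
      = (∏ l' : Fin (m - 2), (t (idxHi l')) ^ (ν ((l' : ℕ) + 2))) *
        ∏ l' : Fin (m - 2), ((t (idxLo l')) ^ (ν ((l' : ℕ) + 2)))⁻¹ := by
    rw [← Finset.prod_mul_distrib]
    exact Finset.prod_congr rfl fun l' _ => by rw [div_pow, div_eq_mul_inv]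
  rw [h2a, h2b, h3, h4, h2c]
  ring

/-! ### The expansion building blocks -/

noncomputable def AfunD (n m : ℕ) (ν : ℕ → ℕ) (V : Fin (m - 1) → ℝ → ℝ)
    (ym : Fin n → ℝ) (y : Fin (m - 1) → Fin n → ℝ) (l : Fin (m - 1)) (j k : Fin n) : ℝ :=
  ((if hl : (l : ℕ) + 1 < m - 1 then y ⟨(l : ℕ) + 1, hl⟩ j else ym j) ^ (ν ((l : ℕ) + 2))) *
    ((y l k) ^ (ν ((l : ℕ) + 2) + 1))⁻¹ *
    Real.exp (-((if hl : (l : ℕ) + 1 < m - 1 then y ⟨(l : ℕ) + 1, hl⟩ j else ym j) / y l k)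
      - V l (y l k))

noncomputable def BfunD (n m : ℕ) (hm : 2 ≤ m) (ν : ℕ → ℕ)
    (y : Fin (m - 1) → Fin n → ℝ) (j c : Fin n) : ℝ :=
  (y (idx0 m hm) j) ^ (ν 1 + (c : ℕ)) * Real.exp (-(y (idx0 m hm) j))

noncomputable def hfunD (n m : ℕ) (hm : 2 ≤ m) (ν : ℕ → ℕ) (V : Fin (m - 1) → ℝ → ℝ)
    (ym : Fin n → ℝ) (c j : Fin n) (t : Fin (m - 1) → ℝ) : ℝ :=
  (t (idx0 m hm)) ^ (ν 1 + (c : ℕ)) *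
    (∏ l : Fin (m - 2), (t (idxHi l) / t (idxLo l)) ^ (ν ((l : ℕ) + 2))) *
    Real.exp (-(t (idx0 m hm)) - (∑ l : Fin (m - 2), t (idxHi l) / t (idxLo l))
      - ym j / t (idxLast m hm) - ∑ l : Fin (m - 1), V l (t l)) *
    ∏ l : Fin (m - 1), (t l)⁻¹

noncomputable def HfunD (n m : ℕ) (hm : 2 ≤ m) (ν : ℕ → ℕ) (V : Fin (m - 1) → ℝ → ℝ)
    (ym : Fin n → ℝ) (c j : Fin n) : (Fin (m - 1) → ℝ) → ℝ :=
  Set.indicator {t : Fin (m - 1) → ℝ | ∀ l, 0 < t l} (hfunD n m hm ν V ym c j)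

noncomputable def termD (n m : ℕ) (hm : 2 ≤ m) (ν : ℕ → ℕ) (V : Fin (m - 1) → ℝ → ℝ)
    (ym : Fin n → ℝ) (σ : Fin (m - 1) → Equiv.Perm (Fin n)) (τ : Equiv.Perm (Fin n))
    (y : Fin (m - 1) → Fin n → ℝ) : ℝ :=
  (∏ l : Fin (m - 1), (epsR (σ l) * ∏ k, AfunD n m ν V ym y l (σ l k) k)) *
    (epsR τ * ∏ j, BfunD n m hm ν y j (τ j))

lemma chain_eval (n m : ℕ) (hm : 2 ≤ m) (ν : ℕ → ℕ) (hνm : ν m = 0)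
    (V : Fin (m - 1) → ℝ → ℝ) (ym : Fin n → ℝ) (c : Fin n) (q : ℕ → Fin n)
    (y : Fin (m - 1) → Fin n → ℝ) :
    BfunD n m hm ν y (q 0) c *
        ∏ l : Fin (m - 1), AfunD n m ν V ym y l (q ((l : ℕ) + 1)) (q (l : ℕ))
      = hfunD n m hm ν V ym c (q (m - 1)) (fun l => y l (q (l : ℕ))) := by
  have hfac : ∀ l : Fin (m - 1), AfunD n m ν V ym y l (q ((l : ℕ) + 1)) (q (l : ℕ))
      = ((if hl : (l : ℕ) + 1 < m - 1
            then (fun l' : Fin (m - 1) => y l' (q (l' : ℕ))) ⟨(l : ℕ) + 1, hl⟩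
            else ym (q (m - 1))) ^ (ν ((l : ℕ) + 2))) *
          (((fun l' : Fin (m - 1) => y l' (q (l' : ℕ))) l) ^ (ν ((l : ℕ) + 2) + 1))⁻¹ *
          Real.exp (-((if hl : (l : ℕ) + 1 < m - 1
            then (fun l' : Fin (m - 1) => y l' (q (l' : ℕ))) ⟨(l : ℕ) + 1, hl⟩
            else ym (q (m - 1))) / (fun l' : Fin (m - 1) => y l' (q (l' : ℕ))) l)
            - V l ((fun l' : Fin (m - 1) => y l' (q (l' : ℕ))) l)) := by
    intro l
    by_cases hl : (l : ℕ) + 1 < m - 1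
    · simp only [AfunD, dif_pos hl]
    · have hEq : (l : ℕ) + 1 = m - 1 := by have := l.isLt; omega
      simp only [AfunD, dif_neg hl, hEq]
  rw [Finset.prod_congr rfl fun l _ => hfac l]
  exact chain_eq m hm ν hνm V (c : ℕ) (ym (q (m - 1))) (fun l => y l (q (l : ℕ)))

lemma term_indicator (n m : ℕ) (hm : 2 ≤ m) (ν : ℕ → ℕ) (hνm : ν m = 0)
    (V : Fin (m - 1) → ℝ → ℝ) (ym : Fin n → ℝ)
    (σ : Fin (m - 1) → Equiv.Perm (Fin n)) (τ : Equiv.Perm (Fin n)) :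
    Set.indicator {y : Fin (m - 1) → Fin n → ℝ | ∀ l j, 0 < y l j}
        (termD n m hm ν V ym σ τ)
      = fun y => (epsR (Pn σ (m - 1)) * epsR τ) *
          ∏ k, HfunD n m hm ν V ym (τ k) (Pn σ (m - 1) k)
            (fun l => y l (Pn σ (l : ℕ) k)) := by
  funext y
  by_cases hy : y ∈ {y : Fin (m - 1) → Fin n → ℝ | ∀ l j, 0 < y l j}
  · rw [Set.indicator_of_mem hy]
    have hymem : ∀ l j, 0 < y l j := hy
    calc termD n m hm ν V ym σ τ y
        = (epsR (Pn σ (m - 1)) * epsR τ) *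
            ((∏ l : Fin (m - 1), ∏ k, AfunD n m ν V ym y l (σ l k) k) *
              ∏ j, BfunD n m hm ν y j (τ j)) := by
          rw [termD, Finset.prod_mul_distrib, epsR_Pn]
          ring
      _ = (epsR (Pn σ (m - 1)) * epsR τ) *
            ((∏ l : Fin (m - 1), ∏ k,
                AfunD n m ν V ym y l (Pn σ ((l : ℕ) + 1) k) (Pn σ (l : ℕ) k)) *
              ∏ j, BfunD n m hm ν y j (τ j)) := by
          congr 1
          congr 1
          apply Finset.prod_congr rfl
          intro l _
          rw [← Equiv.prod_comp (Pn σ (l : ℕ))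
            (fun k => AfunD n m ν V ym y l (σ l k) k)]
          apply Finset.prod_congr rfl
          intro k _
          have hc : σ l (Pn σ (l : ℕ) k) = Pn σ ((l : ℕ) + 1) k := by
            rw [Pn_succ_eq]; rfl
          rw [hc]
      _ = (epsR (Pn σ (m - 1)) * epsR τ) *
            (∏ k, (BfunD n m hm ν y k (τ k) *
              ∏ l : Fin (m - 1),
                AfunD n m ν V ym y l (Pn σ ((l : ℕ) + 1) k) (Pn σ (l : ℕ) k))) := by
          congr 1
          rw [Finset.prod_comm, ← Finset.prod_mul_distrib]
          exact Finset.prod_congr rfl fun k _ => mul_comm _ _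
      _ = (epsR (Pn σ (m - 1)) * epsR τ) *
            ∏ k, hfunD n m hm ν V ym (τ k) (Pn σ (m - 1) k)
              (fun l => y l (Pn σ (l : ℕ) k)) := by
          congr 1
          exact Finset.prod_congr rfl fun k _ =>
            chain_eval n m hm ν hνm V ym (τ k) (fun N => Pn σ N k) y
      _ = (epsR (Pn σ (m - 1)) * epsR τ) *
            ∏ k, HfunD n m hm ν V ym (τ k) (Pn σ (m - 1) k)
              (fun l => y l (Pn σ (l : ℕ) k)) := by
          congr 1
          have hmem' : ∀ k : Fin n, (fun l : Fin (m - 1) => y l (Pn σ (l : ℕ) k))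
              ∈ {t : Fin (m - 1) → ℝ | ∀ l, 0 < t l} := fun k l => hymem l _
          exact Finset.prod_congr rfl fun k _ =>
            (Set.indicator_of_mem (hmem' k) _).symm
  · rw [Set.indicator_of_notMem hy]
    have hex : ∃ l j, ¬ 0 < y l j := by
      by_contra hcon
      push_neg at hcon
      exact hy fun l j => hcon l j
    obtain ⟨l0, j0, hle⟩ := hex
    symm
    apply mul_eq_zero_of_right
    apply Finset.prod_eq_zero (Finset.mem_univ ((Pn σ (l0 : ℕ))⁻¹ j0))
    apply Set.indicator_of_notMem
    intro hmem
    have h := hmem l0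
    simp only at h
    rw [show (Pn σ (l0 : ℕ)) ((Pn σ (l0 : ℕ))⁻¹ j0) = j0 from Equiv.apply_symm_apply _ _] at h
    exact hle h

/-- Integrating the product of transition determinants over the first `m−1` levels gives
`(n!)^{m−1} det[ψ_k(y_j^m)]`.  Levels are 0-based: `y l` is the paper's `y^{l+1}`,
`V l` the paper's `V_{l+1}`, and `ym` is the fixed top level `y^m ∈ (0,∞)^n`. -/
theorem integrate_out_first_levels (n m : ℕ) (hn : 1 ≤ n) (hm : 2 ≤ m)
    (ν : ℕ → ℕ) (hνm : ν m = 0)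
    (V : Fin (m - 1) → ℝ → ℝ)
    (hVcont : ∀ l, ContinuousOn (V l) (Ici 0)) (hVnonneg : ∀ l x, 0 ≤ x → 0 ≤ V l x)
    (ym : Fin n → ℝ) (hym : ∀ j, 0 < ym j)
    (hψ : ∀ (k : Fin n) (y : ℝ), 0 < y → IntegrableOn
      (fun t : Fin (m - 1) → ℝ =>
        (t (idx0 m hm)) ^ (ν 1 + (k : ℕ)) *
          (∏ l : Fin (m - 2), (t (idxHi l) / t (idxLo l)) ^ (ν ((l : ℕ) + 2))) *
          Real.exp (-(t (idx0 m hm)) - (∑ l : Fin (m - 2), t (idxHi l) / t (idxLo l))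
            - y / t (idxLast m hm) - ∑ l : Fin (m - 1), V l (t l)) *
          ∏ l : Fin (m - 1), (t l)⁻¹)
      {t : Fin (m - 1) → ℝ | ∀ l, 0 < t l})
    (hL : IntegrableOn
      (fun y : Fin (m - 1) → Fin n → ℝ =>
        (∏ l : Fin (m - 1),
          (Matrix.of fun j k : Fin n =>
            ((if hl : (l : ℕ) + 1 < m - 1 then y ⟨(l : ℕ) + 1, hl⟩ j else ym j)
                ^ (ν ((l : ℕ) + 2))) *
              ((y l k) ^ (ν ((l : ℕ) + 2) + 1))⁻¹ *
              Real.exp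
                (-((if hl : (l : ℕ) + 1 < m - 1 then y ⟨(l : ℕ) + 1, hl⟩ j else ym j) / y l k)
                  - V l (y l k))).det) *
          (Matrix.of fun j k : Fin n =>
            (y (idx0 m hm) j) ^ (ν 1 + (k : ℕ)) * Real.exp (-(y (idx0 m hm) j))).det)
      {y : Fin (m - 1) → Fin n → ℝ | ∀ l j, 0 < y l j}) :
    (∫ y in {y : Fin (m - 1) → Fin n → ℝ | ∀ l j, 0 < y l j},
        (∏ l : Fin (m - 1),
          (Matrix.of fun j k : Fin n =>
            ((if hl : (l : ℕ) + 1 < m - 1 then y ⟨(l : ℕ) + 1, hl⟩ j else ym j)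
                ^ (ν ((l : ℕ) + 2))) *
              ((y l k) ^ (ν ((l : ℕ) + 2) + 1))⁻¹ *
              Real.exp
                (-((if hl : (l : ℕ) + 1 < m - 1 then y ⟨(l : ℕ) + 1, hl⟩ j else ym j) / y l k)
                  - V l (y l k))).det) *
          (Matrix.of fun j k : Fin n =>
            (y (idx0 m hm) j) ^ (ν 1 + (k : ℕ)) * Real.exp (-(y (idx0 m hm) j))).det)
      = (n.factorial : ℝ) ^ (m - 1) *
        (Matrix.of fun j k : Fin n => psiFun n m hm ν V k (ym j)).det := by
  classical
  have hM1 : 1 ≤ m - 1 := by omega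
  have hposmeas : MeasurableSet {t : Fin (m - 1) → ℝ | ∀ l, 0 < t l} := by
    have he : {t : Fin (m - 1) → ℝ | ∀ l, 0 < t l}
        = Set.pi Set.univ fun _ : Fin (m - 1) => Ioi (0 : ℝ) := by
      ext t; simp [Set.mem_pi]
    rw [he]; exact MeasurableSet.univ_pi fun _ => measurableSet_Ioi
  have hSmeas : MeasurableSet {y : Fin (m - 1) → Fin n → ℝ | ∀ l j, 0 < y l j} := by
    have he : {y : Fin (m - 1) → Fin n → ℝ | ∀ l j, 0 < y l j}
        = Set.pi Set.univ fun _ : Fin (m - 1) =>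
            Set.pi Set.univ fun _ : Fin n => Ioi (0 : ℝ) := by
      ext y; simp [Set.mem_pi]
    rw [he]
    exact MeasurableSet.univ_pi fun _ => MeasurableSet.univ_pi fun _ => measurableSet_Ioi
  have hHint : ∀ c j : Fin n, Integrable (HfunD n m hm ν V ym c j) := by
    intro c j
    simp only [HfunD]
    rw [integrable_indicator_iff hposmeas]
    exact hψ c (ym j) (hym j)
  have hHval : ∀ c j : Fin n,
      (∫ t, HfunD n m hm ν V ym c j t) = psiFun n m hm ν V c (ym j) := by
    intro c j
    simp only [HfunD]
    rw [integral_indicator hposmeas]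
    rfl
  have hint_term : ∀ (σ : Fin (m - 1) → Equiv.Perm (Fin n)) (τ : Equiv.Perm (Fin n)),
      Integrable (Set.indicator {y : Fin (m - 1) → Fin n → ℝ | ∀ l j, 0 < y l j}
        (termD n m hm ν V ym σ τ)) := by
    intro σ τ
    rw [term_indicator n m hm ν hνm V ym σ τ]
    exact ((chain_product_integral (fun l : Fin (m - 1) => Pn σ (l : ℕ))
      (fun k => hHint (τ k) (Pn σ (m - 1) k))).1).const_mul _
  have hval_term : ∀ (σ : Fin (m - 1) → Equiv.Perm (Fin n)) (τ : Equiv.Perm (Fin n)),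
      (∫ y, Set.indicator {y : Fin (m - 1) → Fin n → ℝ | ∀ l j, 0 < y l j}
          (termD n m hm ν V ym σ τ) y)
        = (epsR (Pn σ (m - 1)) * epsR τ) *
            ∏ k, psiFun n m hm ν V (τ k) (ym (Pn σ (m - 1) k)) := by
    intro σ τ
    rw [term_indicator n m hm ν hνm V ym σ τ, integral_const_mul]
    have h2 : (∫ y : Fin (m - 1) → Fin n → ℝ,
        ∏ k, HfunD n m hm ν V ym (τ k) (Pn σ (m - 1) k) (fun l => y l (Pn σ (l : ℕ) k)))
        = ∏ k, ∫ t : Fin (m - 1) → ℝ, HfunD n m hm ν V ym (τ k) (Pn σ (m - 1) k) t :=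
      (chain_product_integral (fun l : Fin (m - 1) => Pn σ (l : ℕ))
        (fun k => hHint (τ k) (Pn σ (m - 1) k))).2
    rw [h2]
    exact congrArg _ (Finset.prod_congr rfl fun k _ => hHval (τ k) (Pn σ (m - 1) k))
  -- rewrite the set integral as an integral of an indicator
  rw [← integral_indicator hSmeas]
  have h0 : (fun y : Fin (m - 1) → Fin n → ℝ =>
        (∏ l : Fin (m - 1), (Matrix.of fun j k : Fin n => AfunD n m ν V ym y l j k).det) *
          (Matrix.of fun j k : Fin n => BfunD n m hm ν y j k).det)
      = (fun y : Fin (m - 1) → Fin n → ℝ =>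
        (∏ l : Fin (m - 1),
          (Matrix.of fun j k : Fin n =>
            ((if hl : (l : ℕ) + 1 < m - 1 then y ⟨(l : ℕ) + 1, hl⟩ j else ym j)
                ^ (ν ((l : ℕ) + 2))) *
              ((y l k) ^ (ν ((l : ℕ) + 2) + 1))⁻¹ *
              Real.exp
                (-((if hl : (l : ℕ) + 1 < m - 1 then y ⟨(l : ℕ) + 1, hl⟩ j else ym j) / y l k)
                  - V l (y l k))).det) *
          (Matrix.of fun j k : Fin n =>
            (y (idx0 m hm) j) ^ (ν 1 + (k : ℕ)) * Real.exp (-(y (idx0 m hm) j))).det) := rfl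
  rw [← h0]
  have hexpand : ∀ y : Fin (m - 1) → Fin n → ℝ,
      (∏ l : Fin (m - 1), (Matrix.of fun j k : Fin n => AfunD n m ν V ym y l j k).det) *
        (Matrix.of fun j k : Fin n => BfunD n m hm ν y j k).det
      = ∑ σ : Fin (m - 1) → Equiv.Perm (Fin n), ∑ τ : Equiv.Perm (Fin n),
          termD n m hm ν V ym σ τ y := by
    intro y
    have hdetA : ∀ l : Fin (m - 1),
        (Matrix.of fun j k : Fin n => AfunD n m ν V ym y l j k).det
          = ∑ p : Equiv.Perm (Fin n), epsR p * ∏ k, AfunD n m ν V ym y l (p k) k := fun l =>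
      det_eq_sum_perm' _
    have hdetB : (Matrix.of fun j k : Fin n => BfunD n m hm ν y j k).det
        = ∑ τ : Equiv.Perm (Fin n), epsR τ * ∏ j, BfunD n m hm ν y j (τ j) := by
      rw [← Matrix.det_transpose, det_eq_sum_perm']
      rfl
    rw [hdetB, Finset.prod_congr rfl fun l _ => hdetA l, Fintype.prod_sum, Finset.sum_mul_sum]
    rfl
  have hindrw : Set.indicator {y : Fin (m - 1) → Fin n → ℝ | ∀ l j, 0 < y l j}
      (fun y : Fin (m - 1) → Fin n → ℝ =>
        (∏ l : Fin (m - 1), (Matrix.of fun j k : Fin n => AfunD n m ν V ym y l j k).det) *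
          (Matrix.of fun j k : Fin n => BfunD n m hm ν y j k).det)
      = fun y => ∑ σ : Fin (m - 1) → Equiv.Perm (Fin n), ∑ τ : Equiv.Perm (Fin n),
          Set.indicator {y : Fin (m - 1) → Fin n → ℝ | ∀ l j, 0 < y l j}
            (termD n m hm ν V ym σ τ) y := by
    funext y
    by_cases hy : y ∈ {y : Fin (m - 1) → Fin n → ℝ | ∀ l j, 0 < y l j}
    · rw [Set.indicator_of_mem hy, hexpand y]
      exact Finset.sum_congr rfl fun σ _ => Finset.sum_congr rfl fun τ _ =>
        (Set.indicator_of_mem hy _).symm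
    · rw [Set.indicator_of_notMem hy]
      exact (Finset.sum_eq_zero fun σ _ => Finset.sum_eq_zero fun τ _ =>
        Set.indicator_of_notMem hy _).symm
  rw [hindrw]
  have hpair : (∑ p : Equiv.Perm (Fin n), ∑ τ : Equiv.Perm (Fin n),
      (epsR p * epsR τ) * ∏ k, psiFun n m hm ν V (τ k) (ym (p k)))
      = (n.factorial : ℝ) * ∑ ρ : Equiv.Perm (Fin n),
          epsR ρ * ∏ c, psiFun n m hm ν V c (ym (ρ c)) := by
    calc (∑ p : Equiv.Perm (Fin n), ∑ τ : Equiv.Perm (Fin n),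
        (epsR p * epsR τ) * ∏ k, psiFun n m hm ν V (τ k) (ym (p k)))
        = ∑ τ : Equiv.Perm (Fin n), ∑ p : Equiv.Perm (Fin n),
            epsR τ * epsR p * ∏ k, psiFun n m hm ν V (τ k) (ym (p k)) := by
          rw [Finset.sum_comm]
          exact Finset.sum_congr rfl fun τ _ => Finset.sum_congr rfl fun p _ => by ring
      _ = (n.factorial : ℝ) * ∑ ρ : Equiv.Perm (Fin n),
            epsR ρ * ∏ c, psiFun n m hm ν V c (ym (ρ c)) :=
          pairing_sum (fun c j => psiFun n m hm ν V c (ym j))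
  have hdet : (Matrix.of fun j k : Fin n => psiFun n m hm ν V k (ym j)).det
      = ∑ ρ : Equiv.Perm (Fin n), epsR ρ * ∏ c, psiFun n m hm ν V c (ym (ρ c)) :=
    det_eq_sum_perm' _
  have hcard : ((Fintype.card (Equiv.Perm (Fin n)) : ℕ) : ℝ) = (n.factorial : ℝ) := by
    rw [Fintype.card_perm, Fintype.card_fin]
  calc (∫ y, ∑ σ : Fin (m - 1) → Equiv.Perm (Fin n), ∑ τ : Equiv.Perm (Fin n),
        Set.indicator {y : Fin (m - 1) → Fin n → ℝ | ∀ l j, 0 < y l j}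
          (termD n m hm ν V ym σ τ) y)
      = ∑ σ : Fin (m - 1) → Equiv.Perm (Fin n), ∫ y, ∑ τ : Equiv.Perm (Fin n),
          Set.indicator {y : Fin (m - 1) → Fin n → ℝ | ∀ l j, 0 < y l j}
            (termD n m hm ν V ym σ τ) y :=
        integral_finset_sum _ (fun σ _ => integrable_finset_sum _ fun τ _ => hint_term σ τ)
    _ = ∑ σ : Fin (m - 1) → Equiv.Perm (Fin n), ∑ τ : Equiv.Perm (Fin n),
          ∫ y, Set.indicator {y : Fin (m - 1) → Fin n → ℝ | ∀ l j, 0 < y l j}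
            (termD n m hm ν V ym σ τ) y :=
        Finset.sum_congr rfl fun σ _ => integral_finset_sum _ fun τ _ => hint_term σ τ
    _ = ∑ σ : Fin (m - 1) → Equiv.Perm (Fin n), ∑ τ : Equiv.Perm (Fin n),
          (epsR (Pn σ (m - 1)) * epsR τ) *
            ∏ k, psiFun n m hm ν V (τ k) (ym (Pn σ (m - 1) k)) :=
        Finset.sum_congr rfl fun σ _ => Finset.sum_congr rfl fun τ _ => hval_term σ τ
    _ = (Fintype.card (Equiv.Perm (Fin n)) : ℝ) ^ (m - 1 - 1) *
          ∑ p : Equiv.Perm (Fin n), ∑ τ : Equiv.Perm (Fin n),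
            (epsR p * epsR τ) * ∏ k, psiFun n m hm ν V (τ k) (ym (p k)) :=
        sum_Pn_eq hM1 (fun p => ∑ τ : Equiv.Perm (Fin n),
          (epsR p * epsR τ) * ∏ k, psiFun n m hm ν V (τ k) (ym (p k)))
    _ = (Fintype.card (Equiv.Perm (Fin n)) : ℝ) ^ (m - 1 - 1) *
          ((n.factorial : ℝ) * ∑ ρ : Equiv.Perm (Fin n),
            epsR ρ * ∏ c, psiFun n m hm ν V c (ym (ρ c))) := by rw [hpair]
    _ = (n.factorial : ℝ) ^ (m - 1) *
          (Matrix.of fun j k : Fin n => psiFun n m hm ν V k (ym j)).det := by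
        rw [hdet, hcard, ← mul_assoc, ← pow_succ,
          show m - 1 - 1 + 1 = m - 1 from by omega]
end

section
/- Fix integers n ≥ 1, m ≥ 2, a real b > 0 and integers ν_1,…,ν_{m−1} ≥ 0. For i,j ∈ {1,…,n} define a_{i,j}(b) = b^{j−1} ∫_{(0,∞)^{m−1}} t_1^{ν_1+i−1} ∏_{l=2}^{m−1}(t_l/t_{l−1})^{ν_l} · t_{m−1}^{j} · exp(−t_1 − ∑_{l=2}^{m−1} t_l/t_{l−1}) (dt_1/t_1)⋯(dt_{m−1}/t_{m−1}). Then det[a_{i,j}(b)]_{i,j=1}^n = b^{n(n−1)/2} ∏_{j=1}^{n} ( Γ(j) ∏_{l=1}^{m−1} Γ(j+ν_l) ). -/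
open MeasureTheory Real Set Finset

section Split
variable {m : ℕ} (hm : 2 ≤ m)

lemma split_prod {M : Type*} [CommMonoid M] (g : Fin (m - 1) → M) :
    ∏ p, g p = g (idx0 m hm) * ∏ l : Fin (m - 2), g (idxHi l) := by
  have h : m - 1 = (m - 2) + 1 := by omega
  have e1 : ∏ p, g p = ∏ q : Fin ((m - 2) + 1), g (finCongr h.symm q) :=
    (Fintype.prod_equiv (finCongr h.symm) _ _ fun q => rfl).symm
  rw [e1, Fin.prod_univ_succ]
  congr 1

lemma split_sum {M : Type*} [AddCommMonoid M] (g : Fin (m - 1) → M) :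
    ∑ p, g p = g (idx0 m hm) + ∑ l : Fin (m - 2), g (idxHi l) := by
  have h : m - 1 = (m - 2) + 1 := by omega
  have e1 : ∑ p, g p = ∑ q : Fin ((m - 2) + 1), g (finCongr h.symm q) :=
    (Fintype.sum_equiv (finCongr h.symm) _ _ fun q => rfl).symm
  rw [e1, Fin.sum_univ_succ]
  congr 1

end Split

noncomputable def phi (m : ℕ) (s : Fin (m - 1) → ℝ) : Fin (m - 1) → ℝ :=
  fun l => ∏ i ∈ Finset.Iic l, s i

lemma phi_zero {m : ℕ} (s : Fin (m - 1) → ℝ) (h0 : 0 < m - 1) :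
    phi m s ⟨0, h0⟩ = s ⟨0, h0⟩ := by
  have : Finset.Iic (⟨0, h0⟩ : Fin (m - 1)) = {⟨0, h0⟩} := by
    ext i
    simp only [Finset.mem_Iic, Finset.mem_singleton, Fin.le_def, Fin.ext_iff]
    omega
  rw [phi, this, Finset.prod_singleton]

lemma phi_succ {m : ℕ} (s : Fin (m - 1) → ℝ) (p : ℕ) (h : p + 1 < m - 1) :
    phi m s ⟨p + 1, h⟩ = phi m s ⟨p, by omega⟩ * s ⟨p + 1, h⟩ := by
  have hins : Finset.Iic (⟨p + 1, h⟩ : Fin (m - 1)) =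
      insert ⟨p + 1, h⟩ (Finset.Iic (⟨p, by omega⟩ : Fin (m - 1))) := by
    ext i
    simp only [Finset.mem_Iic, Finset.mem_insert, Fin.le_def, Fin.ext_iff]
    omega
  have hnm : (⟨p + 1, h⟩ : Fin (m - 1)) ∉ Finset.Iic (⟨p, by omega⟩ : Fin (m - 1)) := by
    simp [Fin.le_def]
  rw [phi, hins, Finset.prod_insert hnm, mul_comm]
  rfl

lemma phi_last {m : ℕ} (hm : 2 ≤ m) (s : Fin (m - 1) → ℝ) :
    phi m s (idxLast m hm) = ∏ i, s i := by
  have : Finset.Iic (idxLast m hm) = Finset.univ := by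
    ext i
    simp only [Finset.mem_Iic, Finset.mem_univ, iff_true, Fin.le_def, idxLast]
    have := i.isLt; omega
  rw [phi, this]

lemma phi_pos {m : ℕ} {s : Fin (m - 1) → ℝ} (hs : ∀ l, 0 < s l) (l : Fin (m - 1)) :
    0 < phi m s l :=
  Finset.prod_pos fun i _ => hs i

lemma phi_ratio {m : ℕ} {s : Fin (m - 1) → ℝ} (hs : ∀ l, 0 < s l) (l : Fin (m - 2)) :
    phi m s (idxHi l) / phi m s (idxLo l) = s (idxHi l) := by
  have h : (l : ℕ) + 1 < m - 1 := (idxHi l).isLt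
  have := phi_succ s (l : ℕ) h
  rw [show idxHi l = ⟨(l : ℕ) + 1, h⟩ from rfl, show idxLo l = ⟨(l : ℕ), by omega⟩ from rfl, this,
    mul_comm, mul_div_assoc, div_self (ne_of_gt (phi_pos hs _)), mul_one]

noncomputable def psi (m : ℕ) (t : Fin (m - 1) → ℝ) : Fin (m - 1) → ℝ :=
  fun l => if h : (l : ℕ) = 0 then t l else t l / t ⟨(l : ℕ) - 1, by have := l.isLt; omega⟩

lemma psi_pos {m : ℕ} {t : Fin (m - 1) → ℝ} (ht : ∀ l, 0 < t l) (l : Fin (m - 1)) :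
    0 < psi m t l := by
  rw [psi]
  split
  · exact ht l
  · exact div_pos (ht l) (ht _)

lemma phi_psi {m : ℕ} {t : Fin (m - 1) → ℝ} (ht : ∀ l, 0 < t l) : phi m (psi m t) = t := by
  funext l
  obtain ⟨p, hp⟩ := l
  induction p with
  | zero =>
    rw [phi_zero, psi]
    simp
  | succ p ih =>
    have hp' : p < m - 1 := by omega
    rw [phi_succ _ p hp, ih hp']
    have h1 : psi m t ⟨p + 1, hp⟩ = t ⟨p + 1, hp⟩ / t ⟨p, hp'⟩ := by
      rw [psi]
      simp
    rw [h1, mul_div_cancel₀]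
    exact ne_of_gt (ht _)

lemma psi_phi {m : ℕ} {s : Fin (m - 1) → ℝ} (hs : ∀ l, 0 < s l) : psi m (phi m s) = s := by
  funext l
  obtain ⟨p, hp⟩ := l
  cases p with
  | zero => rw [psi]; simp [phi_zero s hp]
  | succ p =>
    have hp' : p < m - 1 := by omega
    have h1 : psi m (phi m s) ⟨p + 1, hp⟩ = phi m s ⟨p + 1, hp⟩ / phi m s ⟨p, hp'⟩ := by
      rw [psi]; simp
    rw [h1, phi_succ s p hp, mul_comm, mul_div_assoc, div_self (ne_of_gt (phi_pos hs _)), mul_one]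

lemma phi_injOn (m : ℕ) : Set.InjOn (phi m) {s : Fin (m - 1) → ℝ | ∀ l, 0 < s l} := by
  intro s hs s' hs' h
  rw [← psi_phi hs, ← psi_phi hs', h]

lemma phi_image (m : ℕ) :
    phi m '' {s : Fin (m - 1) → ℝ | ∀ l, 0 < s l} = {s : Fin (m - 1) → ℝ | ∀ l, 0 < s l} := by
  apply Set.Subset.antisymm
  · rintro t ⟨s, hs, rfl⟩
    exact fun l => phi_pos hs l
  · intro t ht
    exact ⟨psi m t, fun l => psi_pos ht l, phi_psi ht⟩

noncomputable def phi' (m : ℕ) (s : Fin (m - 1) → ℝ) : (Fin (m - 1) → ℝ) →L[ℝ] (Fin (m - 1) → ℝ) :=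
  ContinuousLinearMap.pi fun l => ∑ i ∈ Finset.Iic l,
    (∏ j ∈ (Finset.Iic l).erase i, s j) • ContinuousLinearMap.proj i

lemma phi_hasFDerivAt (m : ℕ) (s : Fin (m - 1) → ℝ) : HasFDerivAt (phi m) (phi' m s) s :=
  hasFDerivAt_pi.mpr fun _ => hasFDerivAt_finset_prod

lemma phi'_det {m : ℕ} (s : Fin (m - 1) → ℝ) :
    (phi' m s).det = ∏ l, ∏ i ∈ Finset.Iio l, s i := by
  have hM : LinearMap.toMatrix' ((phi' m s) : (Fin (m - 1) → ℝ) →ₗ[ℝ] (Fin (m - 1) → ℝ)) =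
      Matrix.of (fun l i : Fin (m - 1) =>
        if i ≤ l then ∏ j ∈ (Finset.Iic l).erase i, s j else 0) := by
    ext l i
    rw [LinearMap.toMatrix'_apply]
    simp only [ContinuousLinearMap.coe_coe, phi', ContinuousLinearMap.pi_apply,
      ContinuousLinearMap.coe_sum', Finset.sum_apply, ContinuousLinearMap.smul_apply,
      ContinuousLinearMap.proj_apply, smul_eq_mul, Pi.single_apply, mul_ite, mul_one, mul_zero, Matrix.of_apply]
    rw [Finset.sum_ite_eq' (Finset.Iic l) i]
    simp [Finset.mem_Iic]
  have : (phi' m s).det =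
      (Matrix.of (fun l i : Fin (m - 1) =>
        if i ≤ l then ∏ j ∈ (Finset.Iic l).erase i, s j else 0)).det := by
    rw [ContinuousLinearMap.det, ← LinearMap.det_toMatrix', hM]
  rw [this, Matrix.det_of_lowerTriangular]
  · apply Finset.prod_congr rfl
    intro l _
    simp [Finset.Iic_erase]
  · intro i j hij
    simp only [OrderDual.toDual_lt_toDual] at hij
    simp only [Matrix.of_apply, if_neg (not_le.mpr hij)]

lemma one_dim (e : ℕ) (he : 1 ≤ e) :
    ∫ x in Set.Ioi (0 : ℝ), x ^ e * Real.exp (-x) * x⁻¹ = Real.Gamma e := by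
  rw [Real.Gamma_eq_integral (by exact_mod_cast Nat.pos_of_ne_zero (by omega))]
  apply setIntegral_congr_fun measurableSet_Ioi
  intro x hx
  have hx0 : x ≠ 0 := ne_of_gt hx
  have h1 : (e : ℝ) - 1 = ((e - 1 : ℕ) : ℝ) := by
    rw [Nat.cast_sub he]; simp
  show x ^ e * Real.exp (-x) * x⁻¹ = Real.exp (-x) * x ^ ((e : ℝ) - 1)
  rw [h1, Real.rpow_natCast]
  have h2 : x ^ e * x⁻¹ = x ^ (e - 1) := by
    rw [← Nat.sub_add_cancel he, pow_succ, Nat.sub_add_cancel he, mul_assoc,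
      mul_inv_cancel₀ hx0, mul_one]
  calc x ^ e * Real.exp (-x) * x⁻¹ = Real.exp (-x) * (x ^ e * x⁻¹) := by ring
  _ = Real.exp (-x) * x ^ (e - 1) := by rw [h2]

lemma integral_chain (m : ℕ) (hm : 2 ≤ m) (ν : ℕ → ℕ) (a d : ℕ) :
    ∫ t in {t : Fin (m - 1) → ℝ | ∀ l, 0 < t l},
        t (idx0 m hm) ^ a * (∏ l : Fin (m - 2), (t (idxHi l) / t (idxLo l)) ^ ν ((l : ℕ) + 2)) *
          t (idxLast m hm) ^ (d + 1) *
          Real.exp (-t (idx0 m hm) - ∑ l : Fin (m - 2), t (idxHi l) / t (idxLo l)) *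
          ∏ l : Fin (m - 1), (t l)⁻¹
      = Real.Gamma ((a + d + 1 : ℕ) : ℝ) *
        ∏ l : Fin (m - 2), Real.Gamma ((d + 1 + ν ((l : ℕ) + 2) : ℕ) : ℝ) := by
  set S : Set (Fin (m - 1) → ℝ) := {t | ∀ l, 0 < t l} with hSdef
  have hSm : MeasurableSet S := by
    have : S = Set.univ.pi fun _ => Set.Ioi (0 : ℝ) := by
      ext t; simp [Set.mem_pi, hSdef]
    rw [this]
    exact MeasurableSet.univ_pi fun _ => measurableSet_Ioi
  set E : Fin (m - 1) → ℕ := fun p => (if (p : ℕ) = 0 then a else ν ((p : ℕ) + 1)) + d + 1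
    with hEdef
  set G : (Fin (m - 1) → ℝ) → ℝ := fun t =>
      t (idx0 m hm) ^ a * (∏ l : Fin (m - 2), (t (idxHi l) / t (idxLo l)) ^ ν ((l : ℕ) + 2)) *
        t (idxLast m hm) ^ (d + 1) *
        Real.exp (-t (idx0 m hm) - ∑ l : Fin (m - 2), t (idxHi l) / t (idxLo l)) *
        ∏ l : Fin (m - 1), (t l)⁻¹ with hGdef
  have key := integral_image_eq_integral_abs_det_fderiv_smul (μ := volume) hSm
      (fun x _ => (phi_hasFDerivAt m x).hasFDerivWithinAt) (phi_injOn m) G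
  rw [phi_image] at key
  have step3 : ∫ x in S, |(phi' m x).det| • G (phi m x) =
      ∫ x in S, ∏ p, (x p ^ E p * Real.exp (-x p) * (x p)⁻¹) := by
    apply setIntegral_congr_fun hSm
    intro s hs
    have hs' : ∀ l, 0 < s l := hs
    have h0 : phi m s (idx0 m hm) = s (idx0 m hm) := phi_zero s _
    have hlast : phi m s (idxLast m hm) = ∏ i, s i := phi_last hm s
    have hdet : |(phi' m s).det| = ∏ l, ∏ i ∈ Finset.Iio l, s i := by
      rw [phi'_det]
      exact abs_of_pos (Finset.prod_pos fun l _ => Finset.prod_pos fun i _ => hs' i)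
    have hprodrat : (∏ l : Fin (m - 2),
        (phi m s (idxHi l) / phi m s (idxLo l)) ^ ν ((l : ℕ) + 2)) =
        ∏ l : Fin (m - 2), s (idxHi l) ^ ν ((l : ℕ) + 2) :=
      Finset.prod_congr rfl fun l _ => by rw [phi_ratio hs' l]
    have hsumrat : (∑ l : Fin (m - 2), phi m s (idxHi l) / phi m s (idxLo l)) =
        ∑ l : Fin (m - 2), s (idxHi l) :=
      Finset.sum_congr rfl fun l _ => phi_ratio hs' l
    simp only [smul_eq_mul, hGdef]
    rw [h0, hlast, hdet, hprodrat, hsumrat]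
    simp only [phi]
    have hQ : s (idx0 m hm) ^ a * ∏ l : Fin (m - 2), s (idxHi l) ^ ν ((l : ℕ) + 2) =
        ∏ p, s p ^ (if (p : ℕ) = 0 then a else ν ((p : ℕ) + 1)) := by
      rw [split_prod hm (fun p => s p ^ (if (p : ℕ) = 0 then a else ν ((p : ℕ) + 1)))]
      congr 1
    have hexp : Real.exp (-s (idx0 m hm) - ∑ l : Fin (m - 2), s (idxHi l)) =
        ∏ p, Real.exp (-s p) := by
      rw [← Real.exp_sum]
      congr 1
      have h1 : ∑ p, -s p = -∑ p, s p := by simp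
      rw [h1, split_sum hm s]
      ring
    have hR : (∏ i, s i) ^ (d + 1) = ∏ p, s p ^ (d + 1) := (Finset.prod_pow _ _ _).symm
    have hAB : (∏ l, ∏ i ∈ Finset.Iio l, s i) * ∏ l, (∏ i ∈ Finset.Iic l, s i)⁻¹ =
        ∏ p, (s p)⁻¹ := by
      rw [← Finset.prod_mul_distrib]
      apply Finset.prod_congr rfl
      intro l _
      rw [← Finset.Iio_insert, Finset.prod_insert (by simp)]
      have hne : (∏ i ∈ Finset.Iio l, s i) ≠ 0 :=
        ne_of_gt (Finset.prod_pos fun i _ => hs' i)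
      have hne2 : s l ≠ 0 := ne_of_gt (hs' l)
      field_simp
    have hsplit : ∀ p : Fin (m - 1),
        s p ^ E p = s p ^ (if (p : ℕ) = 0 then a else ν ((p : ℕ) + 1)) * s p ^ (d + 1) := by
      intro p
      show s p ^ ((if (p : ℕ) = 0 then a else ν ((p : ℕ) + 1)) + (d + 1)) = _
      rw [pow_add]
    have hRHS : (∏ p, (s p ^ E p * Real.exp (-s p) * (s p)⁻¹))
        = (∏ p, s p ^ (if (p : ℕ) = 0 then a else ν ((p : ℕ) + 1))) *
          (∏ p, s p ^ (d + 1)) * (∏ p, Real.exp (-s p)) * ∏ p, (s p)⁻¹ := by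
      rw [← Finset.prod_mul_distrib, ← Finset.prod_mul_distrib, ← Finset.prod_mul_distrib]
      exact Finset.prod_congr rfl fun p _ => by rw [hsplit p]
    rw [hRHS, ← hQ, ← hR, ← hexp, ← hAB]
    ring
  have step4 : ∫ x in S, ∏ p, (x p ^ E p * Real.exp (-x p) * (x p)⁻¹) =
      ∏ p, Real.Gamma ((E p : ℕ) : ℝ) := by
    have hind : ∀ x : Fin (m - 1) → ℝ,
        S.indicator (fun t => ∏ p, (t p ^ E p * Real.exp (-t p) * (t p)⁻¹)) x =
        ∏ p, (Set.Ioi (0 : ℝ)).indicator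
          (fun y => y ^ E p * Real.exp (-y) * y⁻¹) (x p) := by
      intro x
      by_cases hx : x ∈ S
      · rw [Set.indicator_of_mem hx]
        exact Finset.prod_congr rfl fun p _ =>
          (Set.indicator_of_mem (Set.mem_Ioi.mpr (hx p))
            (fun y => y ^ E p * Real.exp (-y) * y⁻¹)).symm
      · rw [Set.indicator_of_notMem hx]
        symm
        have : ∃ l, ¬ 0 < x l := by
          by_contra h
          push_neg at h
          exact hx h
        obtain ⟨l, hl⟩ := this
        exact Finset.prod_eq_zero (Finset.mem_univ l)
          (Set.indicator_of_notMem (by simpa using hl) _)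
    rw [← integral_indicator hSm]
    rw [show (∫ x, S.indicator (fun t => ∏ p, (t p ^ E p * Real.exp (-t p) * (t p)⁻¹)) x)
        = ∫ x : Fin (m - 1) → ℝ, ∏ p, (Set.Ioi (0 : ℝ)).indicator
            (fun y => y ^ E p * Real.exp (-y) * y⁻¹) (x p)
      from integral_congr_ae (Filter.Eventually.of_forall hind)]
    rw [MeasureTheory.integral_fintype_prod_volume_eq_prod
      (fun p y => (Set.Ioi (0 : ℝ)).indicator (fun z => z ^ E p * Real.exp (-z) * z⁻¹) y)]
    apply Finset.prod_congr rfl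
    intro p _
    rw [integral_indicator measurableSet_Ioi]
    exact one_dim (E p) (by simp [hEdef])
  rw [key, step3, step4, split_prod hm (fun p => Real.Gamma ((E p : ℕ) : ℝ))]
  refine congr_arg₂ (· * ·) (congr_arg Real.Gamma ?_)
    (Finset.prod_congr rfl fun l _ => congr_arg Real.Gamma ?_)
  · exact congr_arg (Nat.cast : ℕ → ℝ) (by
      show (if (0 : ℕ) = 0 then a else ν (0 + 1)) + d + 1 = a + d + 1
      rw [if_pos rfl])
  · exact congr_arg (Nat.cast : ℕ → ℝ) (by
      show (if ((l : ℕ) + 1) = 0 then a else ν ((l : ℕ) + 2)) + d + 1 = d + 1 + ν ((l : ℕ) + 2)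
      rw [if_neg (Nat.succ_ne_zero _)]
      omega)

lemma gamma_add_nat (y : ℝ) (hy : 0 < y) (i : ℕ) :
    Real.Gamma (y + i) = (∏ r ∈ Finset.range i, (y + r)) * Real.Gamma y := by
  induction i with
  | zero => simp
  | succ i ih =>
    have h1 : y + (i + 1 : ℕ) = (y + i) + 1 := by push_cast; ring
    rw [h1, Real.Gamma_add_one (by positivity), ih, Finset.prod_range_succ]
    ring

lemma asc_eval (y : ℝ) (i : ℕ) :
    (ascPochhammer ℝ i).eval y = ∏ r ∈ Finset.range i, (y + r) := by
  induction i with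
  | zero => simp
  | succ i ih => rw [ascPochhammer_succ_eval, ih, Finset.prod_range_succ]

lemma det_gamma (n : ℕ) (x : ℝ) (hx : 0 < x) :
    (Matrix.of fun i j : Fin n => Real.Gamma (x + i + j)).det =
      (∏ j : Fin n, Real.Gamma (x + j)) *
        (Matrix.vandermonde fun i : Fin n => (i : ℝ)).det := by
  have hentry : ∀ i j : Fin n, Real.Gamma (x + i + j) =
      Real.Gamma (x + i) * (ascPochhammer ℝ (j : ℕ)).eval (x + i) := by
    intro i j
    have h1 : x + i + j = (x + i) + (j : ℕ) := by push_cast; ring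
    rw [h1, gamma_add_nat (x + i) (by positivity), asc_eval]
    ring
  have h2 : (Matrix.of fun i j : Fin n => Real.Gamma (x + i + j)) =
      Matrix.of fun i j : Fin n =>
        Real.Gamma (x + i) * (ascPochhammer ℝ (j : ℕ)).eval (x + i) := by
    ext i j
    exact hentry i j
  erw [h2, Matrix.det_mul_column (fun i : Fin n => Real.Gamma (x + i))
    (Matrix.of fun i j : Fin n => (ascPochhammer ℝ (j : ℕ)).eval (x + (i : ℝ)))]
  congr 1
  show (Matrix.of fun i j : Fin n =>
    ((ascPochhammer ℝ (j : ℕ)).eval (x + (i : ℝ)))).det =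
    (Matrix.vandermonde fun i : Fin n => (i : ℝ)).det
  rw [← Matrix.det_eval_matrixOfPolynomials_eq_det_vandermonde
    (fun q : Fin n => x + (q : ℝ)) (fun q => ascPochhammer ℝ (q : ℕ))
    (fun q => ascPochhammer_natDegree ℝ (q : ℕ))
    (fun q => monic_ascPochhammer ℝ (q : ℕ))]
  have hcomm : (fun q : Fin n => x + (q : ℝ)) = fun q : Fin n => (q : ℝ) + x :=
    funext fun q => add_comm _ _
  rw [hcomm, Matrix.det_vandermonde_add]

lemma vdm_value (n' : ℕ) :
    (Matrix.vandermonde fun i : Fin (n' + 1) => (i : ℝ)).det =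
      ∏ j : Fin (n' + 1), Real.Gamma ((j : ℕ) + 1) := by
  rw [Matrix.det_vandermonde_id_eq_superFactorial n']
  have h1 : ∀ j : Fin (n' + 1), Real.Gamma ((j : ℕ) + 1) = (Nat.factorial (j : ℕ) : ℝ) :=
    fun j => Real.Gamma_nat_eq_factorial (j : ℕ)
  rw [Finset.prod_congr rfl fun j _ => h1 j, ← Nat.cast_prod]
  congr 1
  rw [Fin.prod_univ_eq_prod_range (fun r => Nat.factorial r) (n' + 1),
    Nat.prod_range_succ_factorial]

/-- Fix `n ≥ 1`, `m ≥ 2`, `b > 0` and nonnegative integers `ν_1,…,ν_{m−1}`.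
For the matrix with entries
`a_{i,j}(b) = b^{j−1} ∫_{(0,∞)^{m−1}} t_1^{ν_1+i−1} ∏_{l=2}^{m−1}(t_l/t_{l−1})^{ν_l}
  t_{m−1}^j exp(−t_1 − ∑_{l=2}^{m−1} t_l/t_{l−1}) (dt_1/t_1)⋯(dt_{m−1}/t_{m−1})`
one has `det[a_{i,j}(b)] = b^{n(n−1)/2} ∏_{j=1}^n (Γ(j) ∏_{l=1}^{m−1} Γ(j+ν_l))`.
Here `i,j : Fin n` are the 0-based versions of the 1-based indices. -/
theorem det_a_matrix (n m : ℕ) (hn : 1 ≤ n) (hm : 2 ≤ m) (b : ℝ) (hb : 0 < b)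
    (ν : ℕ → ℕ) :
    (Matrix.of fun i j : Fin n =>
        b ^ (j : ℕ) *
          ∫ t in {t : Fin (m - 1) → ℝ | ∀ l, 0 < t l},
            (t (idx0 m hm)) ^ (ν 1 + (i : ℕ)) *
              (∏ l : Fin (m - 2), (t (idxHi l) / t (idxLo l)) ^ (ν ((l : ℕ) + 2))) *
              (t (idxLast m hm)) ^ ((j : ℕ) + 1) *
              Real.exp (-(t (idx0 m hm)) - ∑ l : Fin (m - 2), t (idxHi l) / t (idxLo l)) *
              ∏ l : Fin (m - 1), (t l)⁻¹).det
      = b ^ (n * (n - 1) / 2) *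
        ∏ j : Fin n,
          (Real.Gamma ((j : ℕ) + 1) *
            ∏ l : Fin (m - 1), Real.Gamma (((j : ℕ) + 1 + ν ((l : ℕ) + 1) : ℕ) : ℝ)) := by
  obtain ⟨n', rfl⟩ : ∃ n', n = n' + 1 := ⟨n - 1, by omega⟩
  set x : ℝ := (ν 1 : ℝ) + 1 with hxdef
  have hx : 0 < x := by positivity
  set C : Fin (n' + 1) → ℝ :=
    fun j => ∏ l : Fin (m - 2), Real.Gamma (((j : ℕ) + 1 + ν ((l : ℕ) + 2) : ℕ) : ℝ) with hCdef
  have hmat : (Matrix.of fun i j : Fin (n' + 1) =>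
        b ^ (j : ℕ) *
          ∫ t in {t : Fin (m - 1) → ℝ | ∀ l, 0 < t l},
            (t (idx0 m hm)) ^ (ν 1 + (i : ℕ)) *
              (∏ l : Fin (m - 2), (t (idxHi l) / t (idxLo l)) ^ (ν ((l : ℕ) + 2))) *
              (t (idxLast m hm)) ^ ((j : ℕ) + 1) *
              Real.exp (-(t (idx0 m hm)) - ∑ l : Fin (m - 2), t (idxHi l) / t (idxLo l)) *
              ∏ l : Fin (m - 1), (t l)⁻¹)
      = Matrix.of fun i j : Fin (n' + 1) =>
          (b ^ (j : ℕ) * C j) * Real.Gamma (x + i + j) := by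
    ext i j
    rw [Matrix.of_apply, Matrix.of_apply,
      integral_chain m hm ν (ν 1 + (i : ℕ)) (j : ℕ)]
    have hg : ((ν 1 + (i : ℕ) + (j : ℕ) + 1 : ℕ) : ℝ) = x + i + j := by
      rw [hxdef]; push_cast; ring
    have hC : (∏ l : Fin (m - 2), Real.Gamma (((j : ℕ) + 1 + ν ((l : ℕ) + 2) : ℕ) : ℝ)) = C j :=
      rfl
    rw [hg, ← hC]
    ring
  erw [hmat, Matrix.det_mul_row (fun j : Fin (n' + 1) => b ^ (j : ℕ) * C j)
    (Matrix.of fun i j : Fin (n' + 1) => Real.Gamma (x + i + j))]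
  have hdg := det_gamma (n' + 1) x hx
  rw [vdm_value n'] at hdg
  rw [hdg]
  have hb' : ∏ j : Fin (n' + 1), b ^ (j : ℕ) = b ^ ((n' + 1) * (n' + 1 - 1) / 2) := by
    rw [Finset.prod_pow_eq_pow_sum]
    congr 1
    rw [Fin.sum_univ_eq_sum_range (fun r => r) (n' + 1), Finset.sum_range_id]
  have hsplitR : ∀ j : Fin (n' + 1),
      (∏ l : Fin (m - 1), Real.Gamma (((j : ℕ) + 1 + ν ((l : ℕ) + 1) : ℕ) : ℝ))
        = Real.Gamma (((j : ℕ) + 1 + ν 1 : ℕ) : ℝ) * C j :=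
    fun j => split_prod hm _
  have hxj : ∀ j : Fin (n' + 1),
      Real.Gamma (((j : ℕ) + 1 + ν 1 : ℕ) : ℝ) = Real.Gamma (x + j) :=
    fun j => congr_arg _ (by rw [hxdef]; push_cast; ring)
  calc (∏ j : Fin (n' + 1), (b ^ (j : ℕ) * C j)) *
        ((∏ j : Fin (n' + 1), Real.Gamma (x + j)) *
          ∏ j : Fin (n' + 1), Real.Gamma ((j : ℕ) + 1))
      = ((∏ j : Fin (n' + 1), b ^ (j : ℕ)) * ∏ j : Fin (n' + 1), C j) *
        ((∏ j : Fin (n' + 1), Real.Gamma (x + j)) *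
          ∏ j : Fin (n' + 1), Real.Gamma ((j : ℕ) + 1)) := by
        rw [Finset.prod_mul_distrib]
    _ = b ^ ((n' + 1) * (n' + 1 - 1) / 2) *
        ∏ j : Fin (n' + 1), (Real.Gamma ((j : ℕ) + 1) *
          (Real.Gamma (x + j) * C j)) := by
        rw [hb', Finset.prod_mul_distrib, Finset.prod_mul_distrib]
        ring
    _ = b ^ ((n' + 1) * (n' + 1 - 1) / 2) *
        ∏ j : Fin (n' + 1), (Real.Gamma ((j : ℕ) + 1) *
          ∏ l : Fin (m - 1), Real.Gamma (((j : ℕ) + 1 + ν ((l : ℕ) + 1) : ℕ) : ℝ)) := by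
        congr 1
        exact Finset.prod_congr rfl fun j _ => by rw [hsplitR j, hxj j]
end

section
/- Fix integers n ≥ 1, m ≥ 2, a real b > 0 and integers ν_1,…,ν_{m−1} ≥ 0. For i,j ∈ {1,…,n} define a_{i,j} = b^{j−1} Γ(i+j−1+ν_1) ∏_{l=2}^{m−1} Γ(j+ν_l), and define c_{j,k} = (b^{j−1} ∏_{l=2}^{m−1} Γ(j+ν_l))^{−1} · ∑_{p=0}^{n−1} [Γ(ν_1+p+1) / (Γ(ν_1+1)² p!)] · [(−p)_{j−1} (−p)_{k−1} / ((ν_1+1)_{j−1} (ν_1+1)_{k−1} (j−1)! (k−1)!)]. Then ∑_{j=1}^n a_{i,j} c_{j,k} = δ_{i,k} for all i,k ∈ {1,…,n}; that is, the matrix (c_{j,k})_{j,k=1}^n is the inverse of (a_{i,j})_{i,j=1}^n. -/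
open Finset

/-- The Pochhammer symbol `(a)_k = a(a+1)⋯(a+k−1)`, with `(a)_0 = 1`. -/
noncomputable def poch (a : ℝ) (k : ℕ) : ℝ := ∏ i ∈ Finset.range k, (a + i)

lemma poch_nat_cast (ν j : ℕ) :
    poch ((ν : ℝ) + 1) j = (ν + j).factorial / ν.factorial := by
  have h : (ν.factorial : ℝ) ≠ 0 := by positivity
  induction j with
  | zero => simp [poch, div_self h]
  | succ j ih =>
      rw [poch, Finset.prod_range_succ, ← poch, ih]
      rw [show ν + (j+1) = (ν+j)+1 from by ring, Nat.factorial_succ]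
      push_cast
      field_simp
      ring

lemma poch_neg_nat (p j : ℕ) :
    poch (-(p:ℝ)) j = (-1)^j * (p.choose j) * j.factorial := by
  induction j with
  | zero => simp [poch]
  | succ j ih =>
      rw [poch, Finset.prod_range_succ, ← poch, ih]
      rcases lt_trichotomy j p with h | h | h
      · have hc : (p.choose (j+1)) * (j+1) = p.choose j * (p - j) :=
          Nat.choose_succ_right_eq p j
        have hc' : ((p.choose (j+1)) : ℝ) * (j+1) = (p.choose j) * ((p:ℝ) - j) := by
          have h2 := congrArg (Nat.cast (R := ℝ)) hc
          push_cast [Nat.cast_sub h.le] at h2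
          linarith
        rw [Nat.factorial_succ]
        push_cast
        linear_combination ((-1:ℝ)^j * j.factorial) * hc'
      · subst h
        simp [Nat.choose_succ_self]
      · have h1 : p.choose j = 0 := Nat.choose_eq_zero_of_lt h
        have h2 : p.choose (j+1) = 0 := Nat.choose_eq_zero_of_lt (by omega)
        simp [h1, h2]

lemma fact_diff (ν i j : ℕ) :
    ((ν+i+j).factorial : ℝ) / (ν+j).factorial - ((ν+i+(j+1)).factorial) / (ν+(j+1)).factorial
      = -(i:ℝ) * (((ν+i+j).factorial : ℝ) / ((ν+j)+1).factorial) := by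
  have h1 : (ν+i+(j+1)) = (ν+i+j)+1 := by ring
  have h2 : (ν+(j+1)) = (ν+j)+1 := by ring
  rw [h1, h2, Nat.factorial_succ, Nat.factorial_succ]
  have ha : ((ν+j).factorial : ℝ) ≠ 0 := by positivity
  have hb : ((ν+j:ℕ):ℝ) + 1 ≠ 0 := by positivity
  push_cast
  field_simp
  ring

lemma sumA (N : ℕ) (p : ℕ) : p ≤ N → ∀ i ν : ℕ,
    ∑ j ∈ Finset.range (N+1), (-1:ℝ)^j * (p.choose j) * ((ν+i+j).factorial / (ν+j).factorial)
      = (-1:ℝ)^p * p.factorial * (i.choose p) * ((ν+i).factorial / (ν+p).factorial) := by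
  induction p with
  | zero =>
      intro _ i ν
      rw [Finset.sum_eq_single 0]
      · simp
      · intro j _ hj
        simp [Nat.choose_eq_zero_of_lt (Nat.pos_of_ne_zero hj)]
      · simp
  | succ p ih =>
      intro hp i ν
      have hpN : p ≤ N := by omega
      set f : ℕ → ℝ := fun j => ((ν+i+j).factorial : ℝ) / (ν+j).factorial with hf
      have hCN : (p.choose N) = 0 := Nat.choose_eq_zero_of_lt (by omega)
      have hS : ∑ j ∈ Finset.range (N+1), (-1:ℝ)^j * ((p+1).choose j) * f j
          = (f 0 - ∑ x ∈ Finset.range N, (-1:ℝ)^x * (p.choose x) * f (x+1))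
            - ∑ x ∈ Finset.range N, (-1:ℝ)^x * (p.choose (x+1)) * f (x+1) := by
        rw [Finset.sum_range_succ' (fun j => (-1:ℝ)^j * ((p+1).choose j) * f j) N]
        simp only [Nat.choose_succ_succ p]
        rw [sub_sub, ← Finset.sum_add_distrib, eq_sub_iff_add_eq, add_right_comm,
          ← Finset.sum_add_distrib]
        rw [Finset.sum_eq_zero (fun x _ => by push_cast; ring)]
        simp
      have hSp : ∑ j ∈ Finset.range (N+1), (-1:ℝ)^j * (p.choose j) * f j
          = f 0 - ∑ x ∈ Finset.range N, (-1:ℝ)^x * (p.choose (x+1)) * f (x+1) := by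
        rw [Finset.sum_range_succ' (fun j => (-1:ℝ)^j * (p.choose j) * f j) N,
          eq_sub_iff_add_eq, add_right_comm, ← Finset.sum_add_distrib]
        rw [Finset.sum_eq_zero (fun x _ => by push_cast; ring)]
        simp
      have hB : ∑ j ∈ Finset.range (N+1), (-1:ℝ)^j * (p.choose j) * f (j+1)
          = ∑ x ∈ Finset.range N, (-1:ℝ)^x * (p.choose x) * f (x+1) := by
        rw [Finset.sum_range_succ, hCN]; simp
      have hD : ∑ j ∈ Finset.range (N+1), (-1:ℝ)^j * (p.choose j) * (f j - f (j+1))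
          = (∑ j ∈ Finset.range (N+1), (-1:ℝ)^j * (p.choose j) * f j)
            - ∑ j ∈ Finset.range (N+1), (-1:ℝ)^j * (p.choose j) * f (j+1) := by
        rw [← Finset.sum_sub_distrib]; exact Finset.sum_congr rfl (fun j _ => by ring)
      have key : ∑ j ∈ Finset.range (N+1), (-1:ℝ)^j * ((p+1).choose j) * f j
          = ∑ j ∈ Finset.range (N+1), (-1:ℝ)^j * (p.choose j) * (f j - f (j+1)) := by
        rw [hD, hSp, hB, hS]; ring
      rw [key]
      have hdiff : ∀ j, f j - f (j+1)
          = -(i:ℝ) * (((ν+i+j).factorial : ℝ) / ((ν+j)+1).factorial) := fun j => fact_diff ν i j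
      rcases Nat.eq_zero_or_pos i with hi | hi
      · subst hi
        rw [Finset.sum_eq_zero (fun j _ => by rw [hdiff j]; push_cast; ring)]
        simp [Nat.choose_eq_zero_of_lt (by omega : (0:ℕ) < p+1)]
      · obtain ⟨i', rfl⟩ : ∃ i', i = i'+1 := ⟨i-1, by omega⟩
        have step : ∀ j, f j - f (j+1)
            = -((i'+1:ℕ):ℝ) * (((ν+1)+i'+j).factorial / ((ν+1)+j).factorial) := by
          intro j
          rw [hdiff j, show ν + (i'+1) + j = ν+1+i'+j from by ring,
            show ν+j+1 = ν+1+j from by ring]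
        calc ∑ j ∈ Finset.range (N+1), (-1:ℝ)^j * (p.choose j) * (f j - f (j+1))
            = -((i'+1:ℕ):ℝ) * ∑ j ∈ Finset.range (N+1),
                (-1:ℝ)^j * (p.choose j) * (((ν+1)+i'+j).factorial / ((ν+1)+j).factorial) := by
              rw [Finset.mul_sum]
              exact Finset.sum_congr rfl (fun j _ => by rw [step j]; ring)
          _ = -((i'+1:ℕ):ℝ) * ((-1:ℝ)^p * p.factorial * (i'.choose p) *
                (((ν+1)+i').factorial / ((ν+1)+p).factorial)) := by rw [ih hpN i' (ν+1)]
          _ = (-1:ℝ)^(p+1) * (p+1).factorial * ((i'+1).choose (p+1)) *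
                ((ν+(i'+1)).factorial / (ν+(p+1)).factorial) := by
              have hc := Nat.add_one_mul_choose_eq i' p
              have hc' : ((i'+1:ℕ):ℝ) * (i'.choose p) = ((i'+1).choose (p+1)) * ((p+1:ℕ):ℝ) := by
                exact_mod_cast congrArg (Nat.cast (R := ℝ)) hc
              rw [show (ν+1)+i' = ν+(i'+1) from by ring, show (ν+1)+p = ν+(p+1) from by ring,
                Nat.factorial_succ]
              push_cast
              push_cast at hc'
              linear_combination (-((-1:ℝ)^p * (p.factorial:ℝ) *
                (((ν+(i'+1)).factorial:ℝ) / ((ν+(p+1)).factorial:ℝ)))) * hc'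

lemma alt_sum_choose (d M : ℕ) (hd : d < M) :
    ∑ q ∈ Finset.range M, (-1:ℝ)^q * ((d.choose q) : ℝ) = if d = 0 then 1 else 0 := by
  have h1 : ∑ q ∈ Finset.range M, (-1:ℝ)^q * ((d.choose q) : ℝ)
      = ∑ q ∈ Finset.range (d+1), (-1:ℝ)^q * ((d.choose q) : ℝ) := by
    symm
    apply Finset.sum_subset (Finset.range_subset_range.2 (by omega))
    intro q _ hq
    simp only [Finset.mem_range, not_lt] at hq
    simp [Nat.choose_eq_zero_of_lt (by omega : d < q)]
  rw [h1]
  have h2 := Int.alternating_sum_range_choose (n := d)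
  exact_mod_cast h2

lemma sumB (n i k : ℕ) (hi : i < n) (hk : k < n) :
    ∑ p ∈ Finset.range n, (-1:ℝ)^(p+k) * ((i.choose p) : ℝ) * ((p.choose k) : ℝ)
      = if i = k then 1 else 0 := by
  by_cases hki : k ≤ i
  · -- split the sum at k
    have hsplit : ∑ p ∈ Finset.range n, (-1:ℝ)^(p+k) * ((i.choose p) : ℝ) * ((p.choose k) : ℝ)
        = ∑ q ∈ Finset.range (n-k), (-1:ℝ)^((k+q)+k) * ((i.choose (k+q)) : ℝ) * (((k+q).choose k) : ℝ) := by
      have e1 : ∑ p ∈ Finset.range n, (-1:ℝ)^(p+k) * ((i.choose p) : ℝ) * ((p.choose k) : ℝ)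
          = ∑ p ∈ Finset.Ico k n, (-1:ℝ)^(p+k) * ((i.choose p) : ℝ) * ((p.choose k) : ℝ) := by
        symm
        rw [Finset.range_eq_Ico]
        apply Finset.sum_subset (Finset.Ico_subset_Ico (by omega) le_rfl)
        intro p hp hp2
        simp only [Finset.mem_Ico] at hp hp2
        have : p < k := by omega
        simp [Nat.choose_eq_zero_of_lt this]
      rw [e1, Finset.sum_Ico_eq_sum_range]
    rw [hsplit]
    have hterm : ∀ q, ((i.choose (k+q)) : ℝ) * (((k+q).choose k) : ℝ)
        = ((i.choose k) : ℝ) * (((i-k).choose q) : ℝ) := by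
      intro q
      by_cases h : k + q ≤ i
      · have := Nat.choose_mul (n := i) (k := k+q) (s := k) (by omega)
        have h4 : (k+q) - k = q := by omega
        rw [h4] at this
        exact_mod_cast congrArg (Nat.cast (R := ℝ)) this
      · have h5 : i.choose (k+q) = 0 := Nat.choose_eq_zero_of_lt (by omega)
        have h6 : (i-k).choose q = 0 := Nat.choose_eq_zero_of_lt (by omega)
        simp [h5, h6]
    have hsum : ∑ q ∈ Finset.range (n-k), (-1:ℝ)^((k+q)+k) * ((i.choose (k+q)) : ℝ) * (((k+q).choose k) : ℝ)
        = ((i.choose k) : ℝ) * ∑ q ∈ Finset.range (n-k), (-1:ℝ)^q * (((i-k).choose q) : ℝ) := by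
      rw [Finset.mul_sum]
      apply Finset.sum_congr rfl
      intro q _
      have hpow : (-1:ℝ)^((k+q)+k) = (-1:ℝ)^q := by
        rw [show (k+q)+k = q + 2*k from by ring, pow_add, pow_mul]
        norm_num
      rw [hpow, mul_assoc, hterm q]
      ring
    rw [hsum, alt_sum_choose (i-k) (n-k) (by omega)]
    by_cases h : i = k
    · subst h; simp
    · simp [h, show i - k ≠ 0 from by omega]
  · -- k > i : all terms vanish
    rw [Finset.sum_eq_zero, if_neg (by omega)]
    intro p _
    by_cases h : p ≤ i
    · simp [Nat.choose_eq_zero_of_lt (show p < k by omega)]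
    · simp [Nat.choose_eq_zero_of_lt (show i < p by omega)]
lemma clean (n ν1 i k : ℕ) (hn : 1 ≤ n) (hi : i < n) (hk : k < n) :
    ∑ j ∈ Finset.range n, ((ν1+i+j).factorial : ℝ) *
      ∑ p ∈ Finset.range n, ((ν1+p).factorial : ℝ) / (((ν1.factorial : ℝ))^2 * p.factorial) *
        ((((-1:ℝ)^j * (p.choose j) * j.factorial) * ((-1:ℝ)^k * (p.choose k) * k.factorial)) /
          ((((ν1+j).factorial : ℝ) / ν1.factorial) * (((ν1+k).factorial : ℝ) / ν1.factorial) *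
            j.factorial * k.factorial))
      = if i = k then 1 else 0 := by
  have hW : ∀ j p : ℕ, ((ν1+i+j).factorial : ℝ) *
      (((ν1+p).factorial : ℝ) / (((ν1.factorial : ℝ))^2 * p.factorial) *
        ((((-1:ℝ)^j * (p.choose j) * j.factorial) * ((-1:ℝ)^k * (p.choose k) * k.factorial)) /
          ((((ν1+j).factorial : ℝ) / ν1.factorial) * (((ν1+k).factorial : ℝ) / ν1.factorial) *
            j.factorial * k.factorial)))
      = ((-1:ℝ)^k * (p.choose k) * (((ν1+p).factorial : ℝ) / (p.factorial * (ν1+k).factorial)))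
        * ((-1:ℝ)^j * (p.choose j) * (((ν1+i+j).factorial : ℝ) / ((ν1+j).factorial))) := by
    intro j p
    have h0 : (ν1.factorial : ℝ) ≠ 0 := by positivity
    have h1 : ((ν1+j).factorial : ℝ) ≠ 0 := by positivity
    have h2 : ((ν1+k).factorial : ℝ) ≠ 0 := by positivity
    have h3 : (j.factorial : ℝ) ≠ 0 := by positivity
    have h4 : (k.factorial : ℝ) ≠ 0 := by positivity
    have h5 : (p.factorial : ℝ) ≠ 0 := by positivity
    field_simp
  have e1 : ∑ j ∈ Finset.range n, ((ν1+i+j).factorial : ℝ) *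
      ∑ p ∈ Finset.range n, ((ν1+p).factorial : ℝ) / (((ν1.factorial : ℝ))^2 * p.factorial) *
        ((((-1:ℝ)^j * (p.choose j) * j.factorial) * ((-1:ℝ)^k * (p.choose k) * k.factorial)) /
          ((((ν1+j).factorial : ℝ) / ν1.factorial) * (((ν1+k).factorial : ℝ) / ν1.factorial) *
            j.factorial * k.factorial))
      = ∑ p ∈ Finset.range n,
          ((-1:ℝ)^k * (p.choose k) * (((ν1+p).factorial : ℝ) / (p.factorial * (ν1+k).factorial)))
          * ∑ j ∈ Finset.range n,
            (-1:ℝ)^j * (p.choose j) * (((ν1+i+j).factorial : ℝ) / ((ν1+j).factorial)) := by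
    simp only [Finset.mul_sum]
    rw [Finset.sum_comm]
    exact Finset.sum_congr rfl fun p _ => Finset.sum_congr rfl fun j _ => hW j p
  rw [e1]
  have e2 : ∀ p, p ∈ Finset.range n →
      ((-1:ℝ)^k * (p.choose k) * (((ν1+p).factorial : ℝ) / (p.factorial * (ν1+k).factorial)))
        * ∑ j ∈ Finset.range n,
          (-1:ℝ)^j * (p.choose j) * (((ν1+i+j).factorial : ℝ) / ((ν1+j).factorial))
      = (-1:ℝ)^(p+k) * ((i.choose p) : ℝ) * ((p.choose k) : ℝ)
          * (((ν1+i).factorial : ℝ) / ((ν1+k).factorial)) := by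
    intro p hp
    have hp' : p ≤ n - 1 := by simp only [Finset.mem_range] at hp; omega
    have hA := sumA (n-1) p hp' i ν1
    rw [show n-1+1 = n from by omega] at hA
    rw [hA]
    have h2 : ((ν1+k).factorial : ℝ) ≠ 0 := by positivity
    have h5 : (p.factorial : ℝ) ≠ 0 := by positivity
    have h6 : ((ν1+p).factorial : ℝ) ≠ 0 := by positivity
    field_simp
    ring
  rw [Finset.sum_congr rfl e2, ← Finset.sum_mul, sumB n i k hi hk]
  by_cases h : i = k
  · subst h
    simp [div_self (show ((ν1+i).factorial:ℝ) ≠ 0 by positivity)]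
  · simp [h]

/-- Fix `n ≥ 1`, `m ≥ 2`, `b > 0` and nonnegative integers `ν_1,…,ν_{m−1}`.
With `a_{i,j} = b^{j−1} Γ(i+j−1+ν_1) ∏_{l=2}^{m−1} Γ(j+ν_l)` and
`c_{j,k} = (b^{j−1} ∏_{l=2}^{m−1} Γ(j+ν_l))⁻¹ ∑_{p=0}^{n−1}
  [Γ(ν_1+p+1)/(Γ(ν_1+1)² p!)] (−p)_{j−1}(−p)_{k−1}/((ν_1+1)_{j−1}(ν_1+1)_{k−1}(j−1)!(k−1)!)`,
(indices `i,j,k ∈ {1,…,n}`), the matrix `c` is the inverse of the matrix `a`: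
`∑_{j=1}^n a_{i,j} c_{j,k} = δ_{i,k}`.  Here `i,j,k : Fin n` are the 0-based versions
of the 1-based indices in the statement. -/
theorem matrix_a_inverse (n m : ℕ) (hn : 1 ≤ n) (hm : 2 ≤ m) (b : ℝ) (hb : 0 < b)
    (ν : ℕ → ℕ) (i k : Fin n) :
    ∑ j : Fin n,
        (b ^ (j : ℕ) * Real.Gamma (((i : ℕ) + (j : ℕ) + 1 + ν 1 : ℕ) : ℝ) *
          ∏ l : Fin (m - 2), Real.Gamma (((j : ℕ) + 1 + ν ((l : ℕ) + 2) : ℕ) : ℝ)) *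
        ((b ^ (j : ℕ) * ∏ l : Fin (m - 2),
            Real.Gamma (((j : ℕ) + 1 + ν ((l : ℕ) + 2) : ℕ) : ℝ))⁻¹ *
          ∑ p ∈ Finset.range n,
            Real.Gamma ((ν 1 : ℝ) + p + 1) /
                (Real.Gamma ((ν 1 : ℝ) + 1) ^ 2 * (Nat.factorial p : ℝ)) *
              (poch (-(p : ℝ)) (j : ℕ) * poch (-(p : ℝ)) (k : ℕ) /
                (poch ((ν 1 : ℝ) + 1) (j : ℕ) * poch ((ν 1 : ℝ) + 1) (k : ℕ) *
                  (Nat.factorial (j : ℕ) : ℝ) * (Nat.factorial (k : ℕ) : ℝ))))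
      = if i = k then 1 else 0 := by
  have hP : ∀ j : ℕ,
      b ^ j * (∏ l : Fin (m - 2), Real.Gamma (((j + 1 + ν ((l : ℕ) + 2) : ℕ) : ℝ))) ≠ 0 := by
    intro j
    apply ne_of_gt
    apply mul_pos (pow_pos hb j)
    apply Finset.prod_pos
    intro l _
    apply Real.Gamma_pos_of_pos
    have : 0 < j + 1 + ν ((l : ℕ) + 2) := by omega
    exact_mod_cast Nat.cast_pos.2 this
  have hcancel : ∀ (j : ℕ) (G S : ℝ),
      (b ^ j * G * ∏ l : Fin (m - 2), Real.Gamma (((j + 1 + ν ((l : ℕ) + 2) : ℕ) : ℝ))) *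
        ((b ^ j * ∏ l : Fin (m - 2), Real.Gamma (((j + 1 + ν ((l : ℕ) + 2) : ℕ) : ℝ)))⁻¹ * S)
        = G * S := by
    intro j G S
    have h := mul_inv_cancel₀ (hP j)
    generalize hq : (∏ l : Fin (m - 2), Real.Gamma (((j + 1 + ν ((l : ℕ) + 2) : ℕ) : ℝ))) = P at h ⊢
    calc (b ^ j * G * P) * ((b ^ j * P)⁻¹ * S)
        = G * S * ((b ^ j * P) * (b ^ j * P)⁻¹) := by ring
      _ = G * S := by rw [h, mul_one]
  simp only [hcancel]
  have hGA : ∀ a c d : ℕ, Real.Gamma (((a + c + 1 + d : ℕ)) : ℝ) = ((d + a + c).factorial : ℝ) := by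
    intro a c d
    rw [show ((a + c + 1 + d : ℕ) : ℝ) = ((d + a + c : ℕ) : ℝ) + 1 from by push_cast; ring,
      Real.Gamma_nat_eq_factorial]
  have hGD : ∀ p : ℕ, Real.Gamma ((ν 1 : ℝ) + p + 1) = (((ν 1) + p).factorial : ℝ) := by
    intro p
    rw [show ((ν 1 : ℝ) + p + 1) = (((ν 1 + p : ℕ)) : ℝ) + 1 from by push_cast; ring,
      Real.Gamma_nat_eq_factorial]
  have hGC : Real.Gamma ((ν 1 : ℝ) + 1) = ((ν 1).factorial : ℝ) := by
    rw [show ((ν 1 : ℝ) + 1) = (((ν 1 : ℕ)) : ℝ) + 1 from by push_cast; ring,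
      Real.Gamma_nat_eq_factorial]
  simp only [hGA, hGD, hGC, poch_neg_nat, poch_nat_cast]
  rw [Fin.sum_univ_eq_sum_range (fun j => ((ν 1 + (i:ℕ) + j).factorial : ℝ) *
      ∑ p ∈ Finset.range n, ((ν 1 + p).factorial : ℝ) / ((((ν 1).factorial : ℝ))^2 * p.factorial) *
        ((((-1:ℝ)^j * (p.choose j) * j.factorial) *
            ((-1:ℝ)^(k:ℕ) * (p.choose (k:ℕ)) * (k:ℕ).factorial)) /
          ((((ν 1 + j).factorial : ℝ) / (ν 1).factorial) *
            (((ν 1 + (k:ℕ)).factorial : ℝ) / (ν 1).factorial) *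
            j.factorial * (k:ℕ).factorial))) n]
  rw [show (if i = k then (1:ℝ) else 0) = if (i : ℕ) = (k : ℕ) then 1 else 0 from by
    simp [Fin.val_inj]]
  exact clean n (ν 1) i k hn i.2 k.2
end

section
/- Let N ≥ 1 be an integer and ν > −1 a real number. Define the Hankel matrix H = (h_{k+l})_{k,l=0}^{N−1} with h_k = Γ(k+ν+1), and define α = (α_{k,l})_{k,l=0}^{N−1} by α_{k,l} = ∑_{p=0}^{N−1} Γ(ν+p+1) (−p)_k (−p)_l / (p! Γ(ν+k+1) Γ(ν+l+1) k! l!). Then α is the inverse of H, i.e. ∑_{l=0}^{N−1} Γ(k+l+ν+1) α_{l,j} = δ_{k,j} for all k,j ∈ {0,…,N−1}. -/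
open Finset

lemma poch_zero (a : ℝ) : poch a 0 = 1 := by simp [poch]

lemma poch_succ (a : ℝ) (n : ℕ) : poch a (n+1) = poch a n * (a + n) :=
  Finset.prod_range_succ _ _

lemma poch_succ' (a : ℝ) (n : ℕ) : poch a (n+1) = a * poch (a+1) n := by
  rw [poch, Finset.prod_range_succ' (fun i => a + (i:ℝ))]
  rw [show a + ((0:ℕ):ℝ) = a by simp, mul_comm]
  congr 1
  rw [poch]
  apply Finset.prod_congr rfl
  intro i _
  push_cast; ring

lemma poch_add (a : ℝ) (m n : ℕ) : poch a (m+n) = poch a m * poch (a+m) n := by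
  rw [poch, Finset.prod_range_add]
  congr 1
  apply Finset.prod_congr rfl
  intro i _
  push_cast; ring

lemma poch_pos {a : ℝ} (ha : 0 < a) (n : ℕ) : 0 < poch a n := by
  apply Finset.prod_pos
  intro i _
  positivity

lemma poch_neg_zero {p l : ℕ} (h : p < l) : poch (-(p:ℝ)) l = 0 := by
  apply Finset.prod_eq_zero (Finset.mem_range.2 h)
  simp

lemma poch_neg_eq {p l : ℕ} (h : l ≤ p) :
    poch (-(p:ℝ)) l = (-1)^l * (l.factorial * p.choose l) := by
  have : poch (-(p:ℝ)) l = (-1)^l * ∏ i ∈ range l, ((p:ℝ) - i) := by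
    calc poch (-(p:ℝ)) l = ∏ i ∈ range l, ((-1) * ((p:ℝ) - i)) :=
          Finset.prod_congr rfl (by intro i _; ring)
      _ = (∏ _i ∈ range l, (-1:ℝ)) * ∏ i ∈ range l, ((p:ℝ) - i) :=
          Finset.prod_mul_distrib
      _ = (-1)^l * ∏ i ∈ range l, ((p:ℝ) - i) := by
          rw [Finset.prod_const, Finset.card_range]
  rw [this]
  congr 1
  have h2 : ∏ i ∈ range l, ((p:ℝ) - i) = (p.descFactorial l : ℝ) := by
    rw [Nat.descFactorial_eq_prod_range]
    push_cast
    apply Finset.prod_congr rfl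
    intro i hi
    rw [Nat.cast_sub (le_of_lt (lt_of_lt_of_le (mem_range.1 hi) h))]
  rw [h2, Nat.descFactorial_eq_factorial_mul_choose]
  push_cast; ring

lemma gamma_add_nat_s12 {x : ℝ} (hx : 0 < x) (n : ℕ) :
    Real.Gamma (x + n) = Real.Gamma x * poch x n := by
  induction n with
  | zero => simp [poch_zero]
  | succ n ih =>
    have hxn : (x + n) ≠ 0 := by positivity
    have : x + ((n:ℝ)+1) = (x + n) + 1 := by ring
    rw [Nat.cast_add, Nat.cast_one, this, Real.Gamma_add_one hxn, ih, poch_succ]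
    ring

lemma key_sum (k : ℕ) : ∀ p : ℕ, ∀ y : ℝ,
    ∑ l ∈ range (p+1), (-1:ℝ)^l * (p.choose l) * poch (y + l) k
      = poch (-(k:ℝ)) p * poch (y + p) (k - p) := by
  intro p
  induction p with
  | zero =>
    intro y
    simp [poch_zero]
  | succ p ih =>
    intro y
    have hS : ∑ l ∈ range (p+1+1), (-1:ℝ)^l * ((p+1).choose l) * poch (y + l) k
        = (∑ l ∈ range (p+1+1), (-1:ℝ)^l * (p.choose l) * poch (y + l) k)
          - ∑ l ∈ range (p+1), (-1:ℝ)^l * (p.choose l) * poch (y + ((l+1:ℕ)):ℝ) k := by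
      rw [Finset.sum_range_succ' (fun l => (-1:ℝ)^l * ((p+1).choose l) * poch (y + l) k)]
      rw [Finset.sum_range_succ' (fun l => (-1:ℝ)^l * (p.choose l) * poch (y + l) k)]
      rw [add_sub_right_comm, ← Finset.sum_sub_distrib]
      congr 1
      · apply Finset.sum_congr rfl
        intro l _
        have hc : ((p+1).choose (l+1) : ℝ) = p.choose l + p.choose (l+1) := by
          rw [Nat.choose_succ_succ']; push_cast; ring
        rw [hc]; ring
      · simp
    have hA : ∑ l ∈ range (p+1+1), (-1:ℝ)^l * (p.choose l) * poch (y + l) k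
        = poch (-(k:ℝ)) p * poch (y + p) (k - p) := by
      rw [Finset.sum_range_succ, Nat.choose_succ_self]
      simpa using ih y
    have hB : ∑ l ∈ range (p+1), (-1:ℝ)^l * (p.choose l) * poch (y + ((l+1:ℕ)):ℝ) k
        = poch (-(k:ℝ)) p * poch ((y+1) + p) (k - p) := by
      rw [← ih (y+1)]
      apply Finset.sum_congr rfl
      intro l _
      rw [show (y + ((l+1:ℕ)) : ℝ) = (y+1) + l by push_cast; ring]
    rw [hS, hA, hB]
    rcases le_or_gt k p with hkp | hkp
    · rw [Nat.sub_eq_zero_of_le hkp, Nat.sub_eq_zero_of_le (hkp.trans (Nat.le_succ p)),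
        poch_zero, poch_zero, poch_neg_zero (Nat.lt_succ_of_le hkp)]
      ring
    · obtain ⟨m, hm⟩ : ∃ m, k = p + m + 1 := ⟨k - p - 1, by omega⟩
      rw [show k - p = m + 1 from by omega, show k - (p+1) = m from by omega]
      rw [show ((p+1:ℕ)) = ((p:ℝ)+1) from by push_cast; ring]
      rw [poch_succ', show y + ((p:ℝ)+1) = (y + p) + 1 from by ring,
        show y + 1 + (p:ℝ) = (y + p) + 1 from by ring, poch_succ,
        poch_succ (-(k:ℝ)) p]
      have hk : (k:ℝ) = (p:ℝ) + m + 1 := by rw [hm]; push_cast; ring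
      rw [hk]
      ring

lemma pochInnerSum {x : ℝ} (hx : 0 < x) (k N p : ℕ) (hp : p < N) :
    ∑ l ∈ range N, poch x (k+l) * poch (-(p:ℝ)) l / (poch x l * l.factorial)
      = poch (-(k:ℝ)) p * poch (x + p) (k - p) := by
  rw [← key_sum k p x]
  rw [← Finset.sum_subset (Finset.range_subset_range.2 hp)
    (fun l _ hl => by
      rw [poch_neg_zero (by simpa using hl), mul_zero, zero_div])]
  apply Finset.sum_congr rfl
  intro l hl
  have hlp : l ≤ p := Nat.lt_succ_iff.1 (Finset.mem_range.1 hl)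
  rw [poch_neg_eq hlp, show k + l = l + k from Nat.add_comm k l, poch_add x l k]
  have h1 : poch x l ≠ 0 := (poch_pos hx l).ne'
  have h2 : (l.factorial : ℝ) ≠ 0 := Nat.cast_ne_zero.2 l.factorial_ne_zero
  field_simp

lemma alt_choose_sum (n : ℕ) :
    ∑ q ∈ range (n+1), (-1:ℝ)^q * (n.choose q) = if n = 0 then 1 else 0 := by
  have h2 := congrArg (fun z : ℤ => (z : ℝ)) (Int.alternating_sum_range_choose (n := n))
  push_cast at h2
  simpa using h2

lemma disc_sum (N k j : ℕ) (hk : k < N) :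
    ∑ p ∈ range N, poch (-(k:ℝ)) p * poch (-(p:ℝ)) j / p.factorial
      = if k = j then (k.factorial : ℝ) else 0 := by
  rw [← Finset.sum_subset (Finset.range_subset_range.2 hk)
    (fun p _ hp => by
      rw [poch_neg_zero (by simpa using hp), zero_mul, zero_div])]
  rcases lt_or_ge k j with hkj | hjk
  · rw [if_neg (by omega)]
    apply Finset.sum_eq_zero
    intro p hp
    have : p < j := by have := Finset.mem_range.1 hp; omega
    rw [poch_neg_zero this, mul_zero, zero_div]
  · have hterm : ∀ p ∈ range (k+1),
        poch (-(k:ℝ)) p * poch (-(p:ℝ)) j / p.factorial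
          = ((-1:ℝ)^j * j.factorial) * ((-1:ℝ)^p * (k.choose p) * (p.choose j)) := by
      intro p hp
      have hpk : p ≤ k := Nat.lt_succ_iff.1 (Finset.mem_range.1 hp)
      rw [poch_neg_eq hpk]
      rcases lt_or_ge p j with hpj | hjp
      · rw [poch_neg_zero hpj, Nat.choose_eq_zero_of_lt hpj]
        simp
      · rw [poch_neg_eq hjp]
        have h2 : (p.factorial : ℝ) ≠ 0 := Nat.cast_ne_zero.2 p.factorial_ne_zero
        field_simp
    rw [Finset.sum_congr rfl hterm, ← Finset.mul_sum]
    have hsplit : k + 1 = j + (k - j + 1) := by omega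
    rw [hsplit, Finset.sum_range_add]
    have hfirst : ∑ p ∈ range j, (-1:ℝ)^p * (k.choose p) * (p.choose j) = 0 := by
      apply Finset.sum_eq_zero
      intro p hp
      rw [Nat.choose_eq_zero_of_lt (Finset.mem_range.1 hp)]
      simp
    have hsecond : ∀ q ∈ range (k - j + 1),
        (-1:ℝ)^(j+q) * (k.choose (j+q)) * ((j+q).choose j)
          = ((-1:ℝ)^j * (k.choose j)) * ((-1:ℝ)^q * ((k-j).choose q)) := by
      intro q hq
      have hq' : q ≤ k - j := Nat.lt_succ_iff.1 (Finset.mem_range.1 hq)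
      have hc := Nat.choose_mul (n := k) (k := j+q) (s := j) (by omega)
      rw [Nat.add_sub_cancel_left] at hc
      have hc' : ((k.choose (j+q)) : ℝ) * ((j+q).choose j) = (k.choose j) * ((k-j).choose q) := by
        exact_mod_cast congrArg (Nat.cast : ℕ → ℝ) hc
      calc (-1:ℝ)^(j+q) * (k.choose (j+q)) * ((j+q).choose j)
          = (-1:ℝ)^(j+q) * ((k.choose (j+q) : ℝ) * ((j+q).choose j)) := by ring
        _ = (-1:ℝ)^(j+q) * ((k.choose j : ℝ) * ((k-j).choose q)) := by rw [hc']
        _ = ((-1:ℝ)^j * (k.choose j)) * ((-1:ℝ)^q * ((k-j).choose q)) := by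
            rw [pow_add]; ring
    rw [Finset.sum_congr rfl hsecond, ← Finset.mul_sum, hfirst, alt_choose_sum (k - j)]
    rcases eq_or_ne k j with h | h
    · subst h
      rw [Nat.sub_self, if_pos rfl, if_pos rfl, Nat.choose_self]
      have hone : (-1:ℝ)^k * (-1:ℝ)^k = 1 := by
        rw [← pow_add, ← two_mul, pow_mul]; norm_num
      push_cast
      linear_combination (k.factorial : ℝ) * hone
    · rw [if_neg h, if_neg (by omega)]
      simp


/-- Let `N ≥ 1` and `ν > −1`.  The matrix `α` with entries
`α_{k,l} = ∑_{p=0}^{N−1} Γ(ν+p+1)(−p)_k(−p)_l / (p! Γ(ν+k+1) Γ(ν+l+1) k! l!)`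
is the inverse of the Hankel matrix `(Γ(k+l+ν+1))_{k,l=0}^{N−1}`, i.e.
`∑_{l=0}^{N−1} Γ(k+l+ν+1) α_{l,j} = δ_{k,j}`. -/
theorem hankel_gamma_inverse (N : ℕ) (hN : 1 ≤ N) (ν : ℝ) (hν : -1 < ν)
    (k j : Fin N) :
    ∑ l : Fin N, Real.Gamma ((k : ℕ) + (l : ℕ) + ν + 1) *
        (∑ p ∈ Finset.range N,
          Real.Gamma (ν + p + 1) * poch (-(p : ℝ)) (l : ℕ) * poch (-(p : ℝ)) (j : ℕ) /
            ((Nat.factorial p : ℝ) * Real.Gamma (ν + (l : ℕ) + 1) *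
              Real.Gamma (ν + (j : ℕ) + 1) *
              (Nat.factorial (l : ℕ) : ℝ) * (Nat.factorial (j : ℕ) : ℝ)))
      = if k = j then 1 else 0 := by
  have hx : (0:ℝ) < ν + 1 := by linarith
  have hG : 0 < Real.Gamma (ν + 1) := Real.Gamma_pos_of_pos hx
  have hGne : Real.Gamma (ν + 1) ≠ 0 := hG.ne'
  have hpx : ∀ n : ℕ, poch (ν + 1) n ≠ 0 := fun n => (poch_pos hx n).ne'
  have hfac : ∀ n : ℕ, (n.factorial : ℝ) ≠ 0 :=
    fun n => Nat.cast_ne_zero.2 n.factorial_ne_zero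
  have hK : (k:ℕ) < N := k.isLt
  have hgam : ∀ n : ℕ, Real.Gamma (ν + n + 1) = Real.Gamma (ν + 1) * poch (ν + 1) n := by
    intro n
    rw [show ν + (n:ℝ) + 1 = (ν + 1) + n by ring, gamma_add_nat_s12 hx]
  have step1 : ∀ l : ℕ,
      Real.Gamma ((k:ℕ) + (l:ℝ) + ν + 1) *
        (∑ p ∈ Finset.range N,
          Real.Gamma (ν + p + 1) * poch (-(p : ℝ)) l * poch (-(p : ℝ)) (j : ℕ) /
            ((Nat.factorial p : ℝ) * Real.Gamma (ν + l + 1) *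
              Real.Gamma (ν + (j : ℕ) + 1) *
              (Nat.factorial l : ℝ) * (Nat.factorial (j : ℕ) : ℝ)))
      = ∑ p ∈ Finset.range N,
          (poch (ν+1) p * poch (-(p:ℝ)) (j:ℕ) /
            ((p.factorial:ℝ) * poch (ν+1) (j:ℕ) * ((j:ℕ).factorial : ℝ))) *
          (poch (ν+1) ((k:ℕ)+l) * poch (-(p:ℝ)) l / (poch (ν+1) l * (l.factorial:ℝ))) := by
    intro l
    rw [Finset.mul_sum]
    apply Finset.sum_congr rfl
    intro p _
    rw [show ((k:ℕ):ℝ) + (l:ℝ) + ν + 1 = (ν+1) + (((k:ℕ)+l : ℕ) : ℝ) by push_cast; ring]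
    rw [gamma_add_nat_s12 hx, hgam p, hgam l, hgam (j:ℕ)]
    rw [mul_div_assoc', div_mul_div_comm, div_eq_div_iff]
    · ring
    · exact mul_ne_zero (mul_ne_zero (mul_ne_zero (mul_ne_zero (hfac p)
        (mul_ne_zero hGne (hpx l))) (mul_ne_zero hGne (hpx (j:ℕ)))) (hfac l)) (hfac (j:ℕ))
    · exact mul_ne_zero (mul_ne_zero (mul_ne_zero (hfac p) (hpx (j:ℕ))) (hfac (j:ℕ)))
        (mul_ne_zero (hpx l) (hfac l))
  have e1 : (∑ l : Fin N, Real.Gamma ((k : ℕ) + (l : ℕ) + ν + 1) *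
        (∑ p ∈ Finset.range N,
          Real.Gamma (ν + p + 1) * poch (-(p : ℝ)) (l : ℕ) * poch (-(p : ℝ)) (j : ℕ) /
            ((Nat.factorial p : ℝ) * Real.Gamma (ν + (l : ℕ) + 1) *
              Real.Gamma (ν + (j : ℕ) + 1) *
              (Nat.factorial (l : ℕ) : ℝ) * (Nat.factorial (j : ℕ) : ℝ))))
      = ∑ l : Fin N, ∑ p ∈ Finset.range N,
          (poch (ν+1) p * poch (-(p:ℝ)) (j:ℕ) /
            ((p.factorial:ℝ) * poch (ν+1) (j:ℕ) * ((j:ℕ).factorial : ℝ))) *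
          (poch (ν+1) ((k:ℕ)+(l:ℕ)) * poch (-(p:ℝ)) (l:ℕ) /
            (poch (ν+1) (l:ℕ) * ((l:ℕ).factorial:ℝ))) :=
    Finset.sum_congr rfl (fun l _ => step1 (l:ℕ))
  rw [e1]
  rw [Fin.sum_univ_eq_sum_range (fun l => ∑ p ∈ Finset.range N,
          (poch (ν+1) p * poch (-(p:ℝ)) (j:ℕ) /
            ((p.factorial:ℝ) * poch (ν+1) (j:ℕ) * ((j:ℕ).factorial : ℝ))) *
          (poch (ν+1) ((k:ℕ)+l) * poch (-(p:ℝ)) l / (poch (ν+1) l * (l.factorial:ℝ)))) N]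
  rw [Finset.sum_comm]
  have step2 : ∀ p ∈ Finset.range N,
      (∑ l ∈ Finset.range N,
          (poch (ν+1) p * poch (-(p:ℝ)) (j:ℕ) /
            ((p.factorial:ℝ) * poch (ν+1) (j:ℕ) * ((j:ℕ).factorial : ℝ))) *
          (poch (ν+1) ((k:ℕ)+l) * poch (-(p:ℝ)) l / (poch (ν+1) l * (l.factorial:ℝ))))
      = (poch (ν+1) (k:ℕ) / (poch (ν+1) (j:ℕ) * ((j:ℕ).factorial : ℝ))) *
          (poch (-((k:ℕ):ℝ)) p * poch (-(p:ℝ)) (j:ℕ) / (p.factorial : ℝ)) := by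
    intro p hp
    rw [← Finset.mul_sum, pochInnerSum hx (k:ℕ) N p (Finset.mem_range.1 hp)]
    rcases le_or_gt p (k:ℕ) with hpk | hpk
    · have hsplit : poch (ν+1) (k:ℕ) = poch (ν+1) p * poch ((ν+1)+p) ((k:ℕ)-p) := by
        conv_lhs => rw [show (k:ℕ) = p + ((k:ℕ)-p) from by omega]
        rw [poch_add]
      rw [hsplit]
      rw [div_mul_eq_mul_div, div_mul_eq_mul_div, mul_div_assoc', div_div, div_eq_div_iff]
      · ring
      · exact mul_ne_zero (mul_ne_zero (hfac p) (hpx (j:ℕ))) (hfac (j:ℕ))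
      · exact mul_ne_zero (hfac p) (mul_ne_zero (hpx (j:ℕ)) (hfac (j:ℕ)))
    · rw [poch_neg_zero hpk]
      simp
  rw [Finset.sum_congr rfl step2, ← Finset.mul_sum, disc_sum N (k:ℕ) (j:ℕ) hK]
  rcases eq_or_ne k j with h | h
  · subst h
    rw [if_pos rfl, if_pos rfl, div_mul_eq_mul_div,
      div_eq_one_iff_eq (mul_ne_zero (hpx (k:ℕ)) (hfac (k:ℕ)))]
  · rw [if_neg (fun hh => h (Fin.ext hh)), if_neg h, mul_zero]
end

section
/- Let (X, μ) be a measure space, n ≥ 1 an integer, and φ_1,…,φ_n, ψ_1,…,ψ_n : X → ℂ measurable functions such that φ_i ψ_j is μ-integrable for all i,j and the left-hand side below converges absolutely. Then ∫_{X^n} det[φ_i(y_j)]_{i,j=1}^n · det[ψ_i(y_j)]_{i,j=1}^n dμ(y_1)⋯dμ(y_n) = n! · det[∫_X φ_i(y) ψ_j(y) dμ(y)]_{i,j=1}^n. -/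
open MeasureTheory
open Equiv Finset Matrix

/-- The Andréief integral identity: for measurable `φ_1,…,φ_n, ψ_1,…,ψ_n : X → ℂ`
such that each `φ_i ψ_j` is integrable and the left-hand side converges absolutely,
`∫_{X^n} det[φ_i(y_j)] det[ψ_i(y_j)] dμⁿ = n! det[∫ φ_i ψ_j dμ]`. -/
theorem andreief_identity {X : Type*} [MeasurableSpace X] (μ : Measure X) [SigmaFinite μ]
    (n : ℕ) (hn : 1 ≤ n) (φ ψ : Fin n → X → ℂ)
    (hφ : ∀ i, Measurable (φ i)) (hψ : ∀ i, Measurable (ψ i))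
    (hint : ∀ i j, Integrable (fun y => φ i y * ψ j y) μ)
    (hL : Integrable
      (fun y : Fin n → X =>
        (Matrix.of fun i j : Fin n => φ i (y j)).det *
          (Matrix.of fun i j : Fin n => ψ i (y j)).det)
      (Measure.pi fun _ => μ)) :
    (∫ y : Fin n → X,
        (Matrix.of fun i j : Fin n => φ i (y j)).det *
          (Matrix.of fun i j : Fin n => ψ i (y j)).det ∂(Measure.pi fun _ => μ))
      = (n.factorial : ℂ) *
        (Matrix.of fun i j : Fin n => ∫ y, φ i y * ψ j y ∂μ).det := by
  letI : MeasureSpace X := ⟨μ⟩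
  have hμ : (Measure.pi fun _ : Fin n => μ) = (volume : Measure (Fin n → X)) :=
    (MeasureTheory.volume_pi).symm
  set A : Matrix (Fin n) (Fin n) ℂ := Matrix.of fun i j : Fin n => ∫ y, φ i y * ψ j y ∂μ with hA
  -- pointwise expansion
  have key : ∀ y : Fin n → X,
      (Matrix.of fun i j : Fin n => φ i (y j)).det *
          (Matrix.of fun i j : Fin n => ψ i (y j)).det
        = ∑ σ : Perm (Fin n), ∑ τ : Perm (Fin n),
            ((Perm.sign σ : ℤ) : ℂ) * ((Perm.sign τ : ℤ) : ℂ) *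
              ∏ j, (φ (σ j) (y j) * ψ (τ j) (y j)) := by
    intro y
    rw [Matrix.det_apply', Matrix.det_apply', Finset.sum_mul_sum]
    refine Finset.sum_congr rfl fun σ _ => Finset.sum_congr rfl fun τ _ => ?_
    rw [Finset.prod_mul_distrib]
    simp only [Matrix.of_apply]
    ring
  have hintp : ∀ σ τ : Perm (Fin n),
      Integrable (fun y : Fin n → X =>
        ((Perm.sign σ : ℤ) : ℂ) * ((Perm.sign τ : ℤ) : ℂ) *
          ∏ j, (φ (σ j) (y j) * ψ (τ j) (y j))) (Measure.pi fun _ => μ) := by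
    intro σ τ
    rw [hμ]
    exact (Integrable.fintype_prod (f := fun j x => φ (σ j) x * ψ (τ j) x)
      (fun j => hint (σ j) (τ j))).const_mul _
  calc
    (∫ y : Fin n → X,
        (Matrix.of fun i j : Fin n => φ i (y j)).det *
          (Matrix.of fun i j : Fin n => ψ i (y j)).det ∂(Measure.pi fun _ => μ))
      = ∑ σ : Perm (Fin n), ∑ τ : Perm (Fin n),
          ∫ y : Fin n → X, ((Perm.sign σ : ℤ) : ℂ) * ((Perm.sign τ : ℤ) : ℂ) *
            ∏ j, (φ (σ j) (y j) * ψ (τ j) (y j)) ∂(Measure.pi fun _ => μ) := by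
        simp_rw [key]
        rw [integral_finset_sum _ (fun σ _ => integrable_finset_sum _ (fun τ _ => hintp σ τ))]
        exact Finset.sum_congr rfl fun σ _ =>
          integral_finset_sum _ (fun τ _ => hintp σ τ)
    _ = ∑ σ : Perm (Fin n), ∑ τ : Perm (Fin n),
          ((Perm.sign σ : ℤ) : ℂ) * ((Perm.sign τ : ℤ) : ℂ) * ∏ j, A (σ j) (τ j) := by
        refine Finset.sum_congr rfl fun σ _ => Finset.sum_congr rfl fun τ _ => ?_
        rw [integral_const_mul]
        rw [MeasureTheory.integral_fintype_prod_eq_prod (f := fun j x => φ (σ j) x * ψ (τ j) x)]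
        rfl
    _ = ∑ σ : Perm (Fin n), ((Perm.sign σ : ℤ) : ℂ) *
          ∑ τ : Perm (Fin n), ((Perm.sign τ : ℤ) : ℂ) * ∏ j, A (σ j) (τ j) := by
        simp_rw [Finset.mul_sum, mul_assoc]
    _ = ∑ σ : Perm (Fin n), ((Perm.sign σ : ℤ) : ℂ) * ((Perm.sign σ : ℤ) : ℂ) * A.det := by
        refine Finset.sum_congr rfl fun σ _ => ?_
        have h1 : ∑ τ : Perm (Fin n), ((Perm.sign τ : ℤ) : ℂ) * ∏ j, A (σ j) (τ j)
            = (Matrix.of fun a b : Fin n => A (σ b) a).det := by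
          simp [Matrix.det_apply']
        have h2 : (Matrix.of fun a b : Fin n => A (σ b) a) = (A.submatrix σ id)ᵀ := rfl
        rw [h1, h2, Matrix.det_transpose, Matrix.det_permute, mul_assoc]
    _ = (n.factorial : ℂ) * A.det := by
        have : ∀ σ : Perm (Fin n),
            ((Perm.sign σ : ℤ) : ℂ) * ((Perm.sign σ : ℤ) : ℂ) = 1 := by
          intro σ
          rcases Int.units_eq_one_or (Perm.sign σ) with h | h <;> simp [h]
        simp_rw [this, one_mul, Finset.sum_const, Finset.card_univ, Fintype.card_perm,
          Fintype.card_fin, nsmul_eq_mul]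
end

section
/- For all reals x > 0, b > 0 and every integer j ≥ 1, ∫_0^∞ e^{−y/x} y^{(j−1)/2} I_{j−1}(2b y^{1/2}) dy = x^j b^{j−1} e^{b² x}. -/
open MeasureTheory Real Set

/-- The modified Bessel function of the first kind of integer order `k`,
`I_k(z) = ∑_{m=0}^∞ (z/2)^(2m+k)/(m!(m+k)!)`. -/
noncomputable def besselI (k : ℕ) (z : ℝ) : ℝ :=
  ∑' m : ℕ, (z / 2) ^ (2 * m + k) / ((Nat.factorial m : ℝ) * (Nat.factorial (m + k) : ℝ))

lemma integrableOn_exp_neg_div_mul_pow (n : ℕ) {x : ℝ} (hx : 0 < x) :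
    IntegrableOn (fun y : ℝ => Real.exp (-(y / x)) * y ^ n) (Ioi 0) := by
  have h := integrableOn_rpow_mul_exp_neg_mul_rpow (p := 1) (s := n) (b := 1/x)
    (lt_of_lt_of_le neg_one_lt_zero (Nat.cast_nonneg n)) one_pos (by positivity)
  refine h.congr_fun (fun y hy => ?_) measurableSet_Ioi
  dsimp only
  rw [Real.rpow_one, Real.rpow_natCast]
  rw [mul_comm]
  congr 1
  field_simp

lemma integral_exp_neg_div_mul_pow (n : ℕ) {x : ℝ} (hx : 0 < x) :
    ∫ y in Ioi (0:ℝ), Real.exp (-(y / x)) * y ^ n = (Nat.factorial n : ℝ) * x ^ (n + 1) := by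
  have h := integral_rpow_mul_exp_neg_mul_Ioi (a := (n : ℝ) + 1) (r := 1/x)
    (by positivity) (by positivity)
  rw [show ((n : ℝ) + 1) = ((n + 1 : ℕ) : ℝ) by push_cast; ring] at h
  have h2 : ∫ y in Ioi (0:ℝ), Real.exp (-(y / x)) * y ^ n
      = ∫ t in Ioi (0:ℝ), t ^ ((n : ℕ) : ℝ) * Real.exp (-(1/x * t)) := by
    refine setIntegral_congr_fun measurableSet_Ioi (fun y hy => ?_)
    rw [Real.rpow_natCast, mul_comm]
    congr 2
    field_simp
  rw [show (((n + 1 : ℕ) : ℝ) - 1) = ((n : ℕ) : ℝ) by push_cast; ring] at h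
  rw [h2, h, one_div_one_div, Real.rpow_natCast,
    show ((n + 1 : ℕ) : ℝ) = (n : ℝ) + 1 by push_cast; ring, Real.Gamma_nat_eq_factorial]
  ring

/-- For all reals `x > 0`, `b > 0` and every integer `j ≥ 1`,
`∫_0^∞ e^(−y/x) y^((j−1)/2) I_(j−1)(2b√y) dy = x^j b^(j−1) e^(b²x)`. -/
theorem integral_exp_mul_besselI (x b : ℝ) (hx : 0 < x) (hb : 0 < b) (j : ℕ) (hj : 1 ≤ j) :
    (∫ y in Ioi (0:ℝ),
        Real.exp (-(y / x)) * (Real.sqrt y) ^ (j - 1) * besselI (j - 1) (2 * b * Real.sqrt y))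
      = x ^ j * b ^ (j - 1) * Real.exp (b ^ 2 * x) := by
  obtain ⟨k, rfl⟩ : ∃ k, j = k + 1 := ⟨j - 1, (Nat.succ_pred_eq_of_pos hj).symm⟩
  simp only [Nat.add_sub_cancel]
  set F : ℕ → ℝ → ℝ := fun m y =>
    (b ^ (2 * m + k) / ((Nat.factorial m : ℝ) * (Nat.factorial (m + k) : ℝ))) *
      (Real.exp (-(y / x)) * y ^ (m + k)) with hF
  have hfact : ∀ m : ℕ, (0:ℝ) < (Nat.factorial m : ℝ) * (Nat.factorial (m + k) : ℝ) := by
    intro m; positivity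
  have hInt : ∀ m : ℕ, IntegrableOn (F m) (Ioi 0) := fun m =>
    (integrableOn_exp_neg_div_mul_pow (m + k) hx).const_mul _
  have hval : ∀ m : ℕ, ∫ y in Ioi (0:ℝ), F m y
      = b ^ k * x ^ (k + 1) * ((b ^ 2 * x) ^ m / (Nat.factorial m : ℝ)) := by
    intro m
    rw [hF]
    simp only
    rw [MeasureTheory.integral_const_mul, integral_exp_neg_div_mul_pow (m + k) hx]
    have h1 : (Nat.factorial m : ℝ) ≠ 0 := Nat.cast_ne_zero.mpr (Nat.factorial_ne_zero m)
    have h2 : (Nat.factorial (m + k) : ℝ) ≠ 0 := Nat.cast_ne_zero.mpr (Nat.factorial_ne_zero _)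
    field_simp
    ring
  have hsummable : Summable (fun m => ∫ y in Ioi (0:ℝ), ‖F m y‖) := by
    have heq : (fun m => ∫ y in Ioi (0:ℝ), ‖F m y‖)
        = fun m => b ^ k * x ^ (k + 1) * ((b ^ 2 * x) ^ m / (Nat.factorial m : ℝ)) := by
      funext m
      rw [← hval m]
      refine setIntegral_congr_fun measurableSet_Ioi (fun y hy => ?_)
      rw [Real.norm_eq_abs, abs_of_nonneg]
      have hy' : (0:ℝ) < y := hy
      positivity
    rw [heq]
    exact (Real.summable_pow_div_factorial (b ^ 2 * x)).mul_left _
  have hswap := MeasureTheory.integral_tsum_of_summable_integral_norm hInt hsummable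
  have hpt : ∀ y ∈ Ioi (0:ℝ),
      Real.exp (-(y / x)) * (Real.sqrt y) ^ k * besselI k (2 * b * Real.sqrt y)
        = ∑' m, F m y := by
    intro y hy
    have hy' : (0:ℝ) ≤ y := le_of_lt hy
    rw [besselI, ← tsum_mul_left]
    congr 1
    funext m
    have hz : 2 * b * Real.sqrt y / 2 = b * Real.sqrt y := by ring
    rw [hz, hF]
    simp only
    have hsq : Real.sqrt y ^ k * (b * Real.sqrt y) ^ (2 * m + k)
        = b ^ (2 * m + k) * y ^ (m + k) := by
      rw [mul_pow, ← mul_assoc, mul_comm (Real.sqrt y ^ k), mul_assoc, ← pow_add]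
      congr 1
      have : k + (2 * m + k) = 2 * (m + k) := by ring
      rw [this, pow_mul, Real.sq_sqrt hy']
    have hrw : Real.exp (-(y / x)) * Real.sqrt y ^ k *
        ((b * Real.sqrt y) ^ (2 * m + k) / ((Nat.factorial m : ℝ) * (Nat.factorial (m + k) : ℝ)))
        = Real.exp (-(y / x)) * (Real.sqrt y ^ k * (b * Real.sqrt y) ^ (2 * m + k)) /
          ((Nat.factorial m : ℝ) * (Nat.factorial (m + k) : ℝ)) := by ring
    rw [hrw, hsq]
    ring
  have hlhs : (∫ y in Ioi (0:ℝ),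
      Real.exp (-(y / x)) * (Real.sqrt y) ^ k * besselI k (2 * b * Real.sqrt y))
      = ∫ y in Ioi (0:ℝ), ∑' m, F m y :=
    setIntegral_congr_fun measurableSet_Ioi hpt
  rw [hlhs, ← hswap]
  simp_rw [hval]
  rw [tsum_mul_left]
  have hexp : ∑' m : ℕ, (b ^ 2 * x) ^ m / (Nat.factorial m : ℝ) = Real.exp (b ^ 2 * x) := by
    rw [Real.exp_eq_exp_ℝ, NormedSpace.exp_eq_tsum_div]
  rw [hexp]
  ring
end
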